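/- arXiv:1803.00762 — 7 statements merged into one kernel-verified Lean document; each statement's English description precedes it below -/
import Mathlib

section
/- For every real number p < 0, the function f_p(x) = x/(p·x + 1 - p) is operator monotone on the interval [0, 1 - 1/p); that is, for self-adjoint operators A ≤ B with spectra contained in [0, 1 - 1/p), one has f_p(A) ≤ f_p(B). -/
/-- The scalar function `f_p(x) = x / (p x + 1 - p)`. -/
noncomputable def fScalar (p x : ℝ) : ℝ := x / (p * x + 1 - p)

/-- `f_p` applied to an operator via the continuous functional calculus. -/
noncomputable def fOp (p : ℝ) {H : Type*} [NormedAddCommGroup H] [InnerProductSpace ℂ H]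
    [CompleteSpace H] (A : H →L[ℂ] H) : H →L[ℂ] H :=
  cfc (fun x : ℝ => x / (p * x + 1 - p)) A

set_option synthInstance.maxHeartbeats 1000000 in
set_option maxHeartbeats 2000000 in
theorem stmt_1 {H : Type*} [NormedAddCommGroup H] [InnerProductSpace ℂ H] [CompleteSpace H]
    (p : ℝ) (hp : p < 0) (A B : H →L[ℂ] H)
    (hA : IsSelfAdjoint A) (hB : IsSelfAdjoint B)
    (hAspec : spectrum ℝ A ⊆ Set.Ico 0 (1 - 1 / p))
    (hBspec : spectrum ℝ B ⊆ Set.Ico 0 (1 - 1 / p))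
    (hAB : A ≤ B) : fOp p A ≤ fOp p B := by
  have hp0 : p ≠ 0 := ne_of_lt hp
  set g : ℝ → ℝ := fun x => p * x + 1 - p with hg
  -- g is positive on the interval
  have hgpos : ∀ x ∈ Set.Ico 0 (1 - 1 / p), 0 < g x := by
    intro x hx
    have hx2 : x < 1 - 1 / p := hx.2
    have h1 : p * x > p * (1 - 1 / p) := mul_lt_mul_of_neg_left hx2 hp
    have h2 : p * (1 - 1 / p) = p - 1 := by field_simp
    simp only [hg]
    nlinarith
  have hgA : ∀ x ∈ spectrum ℝ A, g x ≠ 0 := fun x hx => (hgpos x (hAspec hx)).ne'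
  have hgB : ∀ x ∈ spectrum ℝ B, g x ≠ 0 := fun x hx => (hgpos x (hBspec hx)).ne'
  have hgcont : Continuous g := by fun_prop
  -- continuity of the inverse on spectra
  have hinvA : ContinuousOn (fun x => (g x)⁻¹) (spectrum ℝ A) :=
    (hgcont.continuousOn).inv₀ hgA
  have hinvB : ContinuousOn (fun x => (g x)⁻¹) (spectrum ℝ B) :=
    (hgcont.continuousOn).inv₀ hgB
  -- the units
  set uA : (H →L[ℂ] H)ˣ := cfcUnits g A hgA (hf := hgcont.continuousOn) with huA
  set uB : (H →L[ℂ] H)ˣ := cfcUnits g B hgB (hf := hgcont.continuousOn) with huB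
  have hvA : (uA : H →L[ℂ] H) = cfc g A := val_cfcUnits g A hgA
  have hvB : (uB : H →L[ℂ] H) = cfc g B := val_cfcUnits g B hgB
  -- cfc g X = p • X + (1 - p) • 1
  have hcfcg : ∀ (X : H →L[ℂ] H), IsSelfAdjoint X →
      cfc g X = p • X + (1 - p) • (1 : H →L[ℂ] H) := by
    intro X hX
    have : cfc g X = cfc (fun x : ℝ => p * x + (1 - p)) X := by
      apply cfc_congr; intro x _; simp [hg]; ring
    rw [this, cfc_add X (fun x : ℝ => p * x) (fun _ => (1 - p)),
      cfc_const_mul p (fun x : ℝ => x) X, cfc_id' ℝ X, cfc_const (1 - p) X]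
    simp [Algebra.algebraMap_eq_smul_one]
  -- uB ≤ uA
  have hBA : (uB : H →L[ℂ] H) ≤ (uA : H →L[ℂ] H) := by
    rw [hvA, hvB, hcfcg A hA, hcfcg B hB]
    have h1 : (0 : H →L[ℂ] H) ≤ (-p) • (B - A) :=
      smul_nonneg (by linarith) (sub_nonneg.2 hAB)
    have h2 : (-p) • (B - A) = p • A - p • B := by
      rw [smul_sub]; module
    rw [h2, sub_nonneg] at h1
    exact add_le_add_left h1 _
  -- 0 ≤ uB
  have hBpos : (0 : H →L[ℂ] H) ≤ (uB : H →L[ℂ] H) := by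
    rw [hvB]
    exact cfc_nonneg (fun x hx => (hgpos x (hBspec hx)).le)
  -- invert
  have hinv : (↑uA⁻¹ : H →L[ℂ] H) ≤ ↑uB⁻¹ := CStarAlgebra.inv_le_inv hBpos hBA
  rw [val_inv_cfcUnits g A hgA, val_inv_cfcUnits g B hgB] at hinv
  -- rewrite fOp
  have hfop : ∀ (X : H →L[ℂ] H), IsSelfAdjoint X → spectrum ℝ X ⊆ Set.Ico 0 (1 - 1 / p) →
      (∀ x ∈ spectrum ℝ X, g x ≠ 0) → ContinuousOn (fun x => (g x)⁻¹) (spectrum ℝ X) →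
      fOp p X = (1 / p) • (1 : H →L[ℂ] H) +
        ((p - 1) / p) • cfc (fun x => (g x)⁻¹) X := by
    intro X hX hXspec hgX hcX
    have h1 : fOp p X = cfc (fun x : ℝ => (1 / p) + ((p - 1) / p) * (g x)⁻¹) X := by
      apply cfc_congr
      intro x hx
      have hx' := hgX x hx
      simp only [hg] at hx' ⊢
      field_simp
      have hx'' : 1 + x * p - p ≠ 0 := by intro h; apply hx'; linarith
      have hI : (1 + x * p - p) * (1 + x * p - p)⁻¹ = 1 := mul_inv_cancel₀ hx''
      linear_combination hI
    rw [h1, cfc_add X (fun _ => (1 / p)) (fun x => ((p - 1) / p) * (g x)⁻¹)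
        continuousOn_const (continuousOn_const.mul hcX),
      cfc_const (1 / p) X, cfc_const_mul ((p - 1) / p) (fun x => (g x)⁻¹) X hcX]
    simp [Algebra.algebraMap_eq_smul_one]
  rw [hfop A hA hAspec hgA hinvA, hfop B hB hBspec hgB hinvB]
  have hc : (0 : ℝ) ≤ (p - 1) / p := by
    rw [← neg_div_neg_eq]; apply div_nonneg <;> linarith
  have h3 : ((p - 1) / p) • cfc (fun x => (g x)⁻¹) A ≤
      ((p - 1) / p) • cfc (fun x => (g x)⁻¹) B := by
    have := smul_nonneg hc (sub_nonneg.2 hinv)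
    rw [smul_sub, sub_nonneg] at this
    exact this
  exact add_le_add_right h3 _
end

section
/- For every real p < 1, the map A ↦ f_p(A) is an order automorphism of the effect algebra [0, I]: it is a bijection of {A self-adjoint : 0 ≤ A ≤ I} onto itself satisfying A ≤ B ⟺ f_p(A) ≤ f_p(B). -/
section ScalarAux

lemma denPos {p : ℝ} (hp : p < 1) {x : ℝ} (hx : x ∈ Set.Icc (0:ℝ) 1) :
    0 < p * x + 1 - p := by
  obtain ⟨hx0, hx1⟩ := hx
  rcases le_or_gt 0 p with h | h
  · nlinarith
  · nlinarith

lemma fMapsIcc {p : ℝ} (hp : p < 1) {x : ℝ} (hx : x ∈ Set.Icc (0:ℝ) 1) :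
    x / (p * x + 1 - p) ∈ Set.Icc (0:ℝ) 1 := by
  have hd := denPos hp hx
  obtain ⟨hx0, hx1⟩ := hx
  constructor
  · exact div_nonneg hx0 hd.le
  · rw [div_le_one hd]; nlinarith

lemma fComp {p : ℝ} (hp : p < 1) {x : ℝ} (hx : x ∈ Set.Icc (0:ℝ) 1) :
    (x / (p * x + 1 - p)) /
      ((p/(p-1)) * (x / (p * x + 1 - p)) + 1 - p/(p-1)) = x := by
  have hd := denPos hp hx
  have hd' : p * x + 1 - p ≠ 0 := hd.ne'
  have hp1 : p - 1 ≠ 0 := sub_ne_zero.mpr hp.ne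
  have key : (p/(p-1)) * (x / (p * x + 1 - p)) + 1 - p/(p-1) = (p * x + 1 - p)⁻¹ := by
    field_simp
    ring
  rw [key, div_inv_eq_mul, div_mul_cancel₀ x hd']

lemma pPrimeLt {p : ℝ} (hp : p < 1) : p / (p - 1) < 1 := by
  have hp1 : p - 1 < 0 := sub_neg.mpr hp
  rw [div_lt_one_of_neg hp1]
  linarith

lemma pPrimePrime {p : ℝ} (hp : p < 1) : (p/(p-1)) / (p/(p-1) - 1) = p := by
  have hp1 : p - 1 ≠ 0 := sub_ne_zero.mpr hp.ne
  have h2 : p/(p-1) - 1 = 1/(p-1) := by field_simp; ring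
  rw [h2, one_div, div_inv_eq_mul, div_mul_cancel₀ _ hp1]

end ScalarAux

section Op
variable {A : Type*} [CStarAlgebra A] [PartialOrder A] [StarOrderedRing A] {p : ℝ}

set_option linter.unusedSectionVars false

lemma specIcc {a : A} (ha : IsSelfAdjoint a) (h0 : 0 ≤ a) (h1 : a ≤ 1) :
    spectrum ℝ a ⊆ Set.Icc 0 1 := by
  intro x hx
  refine ⟨spectrum_nonneg_of_nonneg h0 hx, ?_⟩
  have h1' : a ≤ algebraMap ℝ A 1 := by simpa using h1
  exact (le_algebraMap_iff_spectrum_le ha).mp h1' x hx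

lemma smulNonneg {c : ℝ} (hc : 0 ≤ c) {a : A} (h0 : 0 ≤ a) : 0 ≤ c • a := by
  have ha : IsSelfAdjoint a := .of_nonneg h0
  have h1 : c • a = c • cfc (id : ℝ → ℝ) a := by rw [cfc_id ℝ a]
  rw [h1, ← cfc_const_mul c (id : ℝ → ℝ) a (by fun_prop)]
  exact cfc_nonneg fun x hx => mul_nonneg hc (spectrum_nonneg_of_nonneg h0 hx)

lemma smulLe {c : ℝ} (hc : 0 ≤ c) {a b : A} (hab : a ≤ b) : c • a ≤ c • b := by
  rw [← sub_nonneg, ← smul_sub]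
  exact smulNonneg hc (sub_nonneg.mpr hab)

lemma cfcDen_eq {a : A} (ha : IsSelfAdjoint a) :
    cfc (fun x : ℝ => p * x + 1 - p) a = p • a + algebraMap ℝ A (1 - p) := by
  have h1 : cfc (fun x : ℝ => p * x + 1 - p) a
      = cfc (fun x : ℝ => p * id x + (1 - p)) a := by
    apply cfc_congr; intro x _; simp only [id]; ring
  rw [h1, cfc_add a _ _ (by fun_prop) (by fun_prop),
    cfc_const_mul p (id : ℝ → ℝ) a (by fun_prop), cfc_id ℝ a, cfc_const (1-p) a]

lemma cfcDen_mul_inv (hp : p < 1) {a : A} (ha : IsSelfAdjoint a)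
    (hs : spectrum ℝ a ⊆ Set.Icc 0 1) :
    cfc (fun x : ℝ => p * x + 1 - p) a * cfc (fun x : ℝ => (p * x + 1 - p)⁻¹) a = 1 := by
  have hic : ContinuousOn (fun x : ℝ => (p * x + 1 - p)⁻¹) (spectrum ℝ a) :=
    (Continuous.continuousOn (by fun_prop)).inv₀ fun x hx => (denPos hp (hs hx)).ne'
  rw [← cfc_mul _ _ a (by fun_prop) hic]
  have : cfc (fun x : ℝ => (p * x + 1 - p) * (p * x + 1 - p)⁻¹) a
      = cfc (fun _ : ℝ => (1:ℝ)) a := by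
    apply cfc_congr; intro x hx
    exact mul_inv_cancel₀ (denPos hp (hs hx)).ne'
  rw [this, cfc_const 1 a, map_one]

lemma cfcInv_mul_den (hp : p < 1) {a : A} (ha : IsSelfAdjoint a)
    (hs : spectrum ℝ a ⊆ Set.Icc 0 1) :
    cfc (fun x : ℝ => (p * x + 1 - p)⁻¹) a * cfc (fun x : ℝ => p * x + 1 - p) a = 1 := by
  have hic : ContinuousOn (fun x : ℝ => (p * x + 1 - p)⁻¹) (spectrum ℝ a) :=
    (Continuous.continuousOn (by fun_prop)).inv₀ fun x hx => (denPos hp (hs hx)).ne'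
  rw [← cfc_mul _ _ a hic (by fun_prop)]
  have : cfc (fun x : ℝ => (p * x + 1 - p)⁻¹ * (p * x + 1 - p)) a
      = cfc (fun _ : ℝ => (1:ℝ)) a := by
    apply cfc_congr; intro x hx
    exact inv_mul_cancel₀ (denPos hp (hs hx)).ne'
  rw [this, cfc_const 1 a, map_one]

lemma cfcF_eq (hp : p < 1) (hp0 : p ≠ 0) {a : A} (ha : IsSelfAdjoint a)
    (hs : spectrum ℝ a ⊆ Set.Icc 0 1) :
    cfc (fun x : ℝ => x / (p * x + 1 - p)) a
      = algebraMap ℝ A (1/p) - ((1-p)/p) • cfc (fun x : ℝ => (p * x + 1 - p)⁻¹) a := by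
  have hic : ContinuousOn (fun x : ℝ => (p * x + 1 - p)⁻¹) (spectrum ℝ a) :=
    (Continuous.continuousOn (by fun_prop)).inv₀ fun x hx => (denPos hp (hs hx)).ne'
  have h1 : cfc (fun x : ℝ => x / (p * x + 1 - p)) a
      = cfc (fun x : ℝ => (fun _ : ℝ => 1/p) x - (fun x : ℝ => (1-p)/p * (p*x+1-p)⁻¹) x) a := by
    apply cfc_congr; intro x hx
    have hd : p * x + 1 - p ≠ 0 := (denPos hp (hs hx)).ne'
    field_simp
    have hd2 : 1 + x * p - p ≠ 0 := by rwa [show 1 + x * p - p = p * x + 1 - p by ring]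
    linear_combination mul_inv_cancel₀ hd2
  rw [h1, cfc_sub (fun _ : ℝ => 1/p) (fun x : ℝ => (1-p)/p * (p*x+1-p)⁻¹) a (by fun_prop) (continuousOn_const.mul hic),
    cfc_const_mul ((1-p)/p) _ a hic, cfc_const (1/p) a]

lemma memS (hp : p < 1) {a : A} (ha : IsSelfAdjoint a) (h0 : 0 ≤ a) (h1 : a ≤ 1) :
    IsSelfAdjoint (cfc (fun x : ℝ => x / (p * x + 1 - p)) a)
      ∧ 0 ≤ cfc (fun x : ℝ => x / (p * x + 1 - p)) a
      ∧ cfc (fun x : ℝ => x / (p * x + 1 - p)) a ≤ 1 := by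
  have hs := specIcc ha h0 h1
  exact ⟨cfc_predicate _ a,
    cfc_nonneg fun x hx => (fMapsIcc hp (hs hx)).1,
    cfc_le_one _ a fun x hx => (fMapsIcc hp (hs hx)).2⟩

lemma cfcMono (hp : p < 1) {a b : A}
    (ha : IsSelfAdjoint a) (ha0 : 0 ≤ a) (ha1 : a ≤ 1)
    (hb : IsSelfAdjoint b) (hb0 : 0 ≤ b) (hb1 : b ≤ 1) (hab : a ≤ b) :
    cfc (fun x : ℝ => x / (p * x + 1 - p)) a ≤ cfc (fun x : ℝ => x / (p * x + 1 - p)) b := by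
  have hsa := specIcc ha ha0 ha1
  have hsb := specIcc hb hb0 hb1
  rcases eq_or_ne p 0 with rfl | hp0
  · have key : ∀ (c : A), IsSelfAdjoint c →
        cfc (fun x : ℝ => x / (0 * x + 1 - 0)) c = c := by
      intro c hc
      have : cfc (fun x : ℝ => x / (0 * x + 1 - 0)) c = cfc (id : ℝ → ℝ) c := by
        apply cfc_congr; intro x _; simp
      rw [this, cfc_id ℝ c]
    rw [key a ha, key b hb]
    exact hab
  · set ia := cfc (fun x : ℝ => (p * x + 1 - p)⁻¹) a with hia
    set ib := cfc (fun x : ℝ => (p * x + 1 - p)⁻¹) b with hib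
    set da := cfc (fun x : ℝ => p * x + 1 - p) a with hda
    set db := cfc (fun x : ℝ => p * x + 1 - p) b with hdb
    have hda0 : (0:A) ≤ da := cfc_nonneg fun x hx => (denPos hp (hsa hx)).le
    have hdb0 : (0:A) ≤ db := cfc_nonneg fun x hx => (denPos hp (hsb hx)).le
    let Ua : Aˣ := ⟨da, ia, cfcDen_mul_inv hp ha hsa, cfcInv_mul_den hp ha hsa⟩
    let Ub : Aˣ := ⟨db, ib, cfcDen_mul_inv hp hb hsb, cfcInv_mul_den hp hb hsb⟩
    have hdiff : db - da = p • (b - a) := by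
      rw [hda, hdb, cfcDen_eq ha, cfcDen_eq hb, smul_sub]
      abel
    have key : ((1-p)/p) • ib ≤ ((1-p)/p) • ia := by
      rcases hp0.lt_or_gt with hneg | hpos
      · have hdba : db ≤ da := by
          rw [← sub_nonneg]
          have : da - db = (-p) • (b - a) := by
            rw [neg_smul, ← hdiff]; abel
          rw [this]
          exact smulNonneg (by linarith) (sub_nonneg.mpr hab)
        have hinv : ia ≤ ib :=
          CStarAlgebra.inv_le_inv (a := Ub) (b := Ua) hdb0 hdba
        rw [← sub_nonneg, ← smul_sub]
        have h' : ((1-p)/p) • (ia - ib) = (-((1-p)/p)) • (ib - ia) := by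
          rw [neg_smul, ← smul_neg, neg_sub]
        rw [h']
        refine smulNonneg ?_ (sub_nonneg.mpr hinv)
        rw [neg_nonneg]
        exact div_nonpos_of_nonneg_of_nonpos (by linarith) hneg.le
      · have hdab : da ≤ db := by
          rw [← sub_nonneg, hdiff]
          exact smulNonneg hpos.le (sub_nonneg.mpr hab)
        have hinv : ib ≤ ia :=
          CStarAlgebra.inv_le_inv (a := Ua) (b := Ub) hda0 hdab
        exact smulLe (div_nonneg (by linarith) hpos.le) hinv
    rw [cfcF_eq hp hp0 ha hsa, cfcF_eq hp hp0 hb hsb]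
    exact sub_le_sub_left key _

lemma cfcComp (hp : p < 1) {a : A} (ha : IsSelfAdjoint a)
    (hs : spectrum ℝ a ⊆ Set.Icc 0 1) :
    cfc (fun x : ℝ => x / ((p/(p-1)) * x + 1 - p/(p-1)))
      (cfc (fun x : ℝ => x / (p * x + 1 - p)) a) = a := by
  have hp' : p/(p-1) < 1 := pPrimeLt hp
  have hfc : ContinuousOn (fun x : ℝ => x / (p * x + 1 - p)) (spectrum ℝ a) :=
    ContinuousOn.div continuousOn_id (by fun_prop) fun x hx => (denPos hp (hs hx)).ne'
  have himg : (fun x : ℝ => x / (p * x + 1 - p)) '' spectrum ℝ a ⊆ Set.Icc 0 1 := by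
    rintro _ ⟨x, hx, rfl⟩
    exact fMapsIcc hp (hs hx)
  have hgc : ContinuousOn (fun x : ℝ => x / ((p/(p-1)) * x + 1 - p/(p-1)))
      ((fun x : ℝ => x / (p * x + 1 - p)) '' spectrum ℝ a) :=
    ContinuousOn.div continuousOn_id (by fun_prop) fun x hx => (denPos hp' (himg hx)).ne'
  rw [← cfc_comp' _ _ a hgc hfc ha]
  have : cfc (fun x : ℝ => (x / (p*x+1-p)) / ((p/(p-1)) * (x / (p*x+1-p)) + 1 - p/(p-1))) a
      = cfc (id : ℝ → ℝ) a := by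
    apply cfc_congr; intro x hx
    exact fComp hp (hs hx)
  rw [this, cfc_id ℝ a]

end Op

theorem stmt_9 {H : Type*} [NormedAddCommGroup H] [InnerProductSpace ℂ H] [CompleteSpace H]
    (p : ℝ) (hp : p < 1) :
    Set.BijOn (fOp p) {A : H →L[ℂ] H | IsSelfAdjoint A ∧ 0 ≤ A ∧ A ≤ 1} {A : H →L[ℂ] H | IsSelfAdjoint A ∧ 0 ≤ A ∧ A ≤ 1} ∧
    ∀ A ∈ {A : H →L[ℂ] H | IsSelfAdjoint A ∧ 0 ≤ A ∧ A ≤ 1}, ∀ B ∈ {A : H →L[ℂ] H | IsSelfAdjoint A ∧ 0 ≤ A ∧ A ≤ 1},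
      (A ≤ B ↔ fOp p A ≤ fOp p B) := by
  set p' : ℝ := p / (p - 1) with hp'def
  have hp' : p' < 1 := pPrimeLt hp
  have hpp : p' / (p' - 1) = p := pPrimePrime hp
  -- fOp p' ∘ fOp p = id on the set
  have hleft : ∀ a : H →L[ℂ] H, IsSelfAdjoint a → 0 ≤ a → a ≤ 1 →
      fOp p' (fOp p a) = a := by
    intro a ha h0 h1
    exact cfcComp hp ha (specIcc ha h0 h1)
  have hright : ∀ b : H →L[ℂ] H, IsSelfAdjoint b → 0 ≤ b → b ≤ 1 →
      fOp p (fOp p' b) = b := by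
    intro b hb h0 h1
    have := cfcComp hp' hb (specIcc hb h0 h1)
    rw [hpp] at this
    exact this
  have hmaps : ∀ q : ℝ, q < 1 → Set.MapsTo (fOp q)
      {A : H →L[ℂ] H | IsSelfAdjoint A ∧ 0 ≤ A ∧ A ≤ 1}
      {A : H →L[ℂ] H | IsSelfAdjoint A ∧ 0 ≤ A ∧ A ≤ 1} := by
    intro q hq a ha
    obtain ⟨h1, h2, h3⟩ := ha
    exact memS hq h1 h2 h3
  have hmono : ∀ q : ℝ, q < 1 → ∀ a b : H →L[ℂ] H,
      (IsSelfAdjoint a ∧ 0 ≤ a ∧ a ≤ 1) → (IsSelfAdjoint b ∧ 0 ≤ b ∧ b ≤ 1) →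
      a ≤ b → fOp q a ≤ fOp q b := by
    intro q hq a b ⟨ha1, ha2, ha3⟩ ⟨hb1, hb2, hb3⟩ hab
    exact cfcMono hq ha1 ha2 ha3 hb1 hb2 hb3 hab
  constructor
  · refine ⟨hmaps p hp, ?_, ?_⟩
    · intro a ha b hb hab
      obtain ⟨ha1, ha2, ha3⟩ := ha
      obtain ⟨hb1, hb2, hb3⟩ := hb
      rw [← hleft a ha1 ha2 ha3, ← hleft b hb1 hb2 hb3, hab]
    · intro b hb
      obtain ⟨hb1, hb2, hb3⟩ := hb
      exact ⟨fOp p' b, hmaps p' hp' ⟨hb1, hb2, hb3⟩, hright b hb1 hb2 hb3⟩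
  · intro a ha b hb
    obtain ⟨ha1, ha2, ha3⟩ := ha
    obtain ⟨hb1, hb2, hb3⟩ := hb
    constructor
    · exact hmono p hp a b ⟨ha1, ha2, ha3⟩ ⟨hb1, hb2, hb3⟩
    · intro h
      have := hmono p' hp' (fOp p a) (fOp p b)
        (hmaps p hp ⟨ha1, ha2, ha3⟩) (hmaps p hp ⟨hb1, hb2, hb3⟩) h
      rwa [hleft a ha1 ha2 ha3, hleft b hb1 hb2 hb3] at this
end

section
/- For every real p < 1, the map A ↦ f_p(A) is a homeomorphism of the effect algebra [0, I] onto itself with respect to the operator norm topology. -/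
namespace StmtAux

lemma denom_pos {p : ℝ} (hp : p < 1) {x : ℝ} (hx : x ∈ Set.Icc (0:ℝ) 1) :
    0 < p * x + 1 - p := by
  rcases le_or_gt p 0 with h | h
  · nlinarith [mul_le_mul_of_nonpos_left hx.2 h]
  · nlinarith [mul_nonneg h.le hx.1]

lemma fScalar_mem {p : ℝ} (hp : p < 1) {x : ℝ} (hx : x ∈ Set.Icc (0:ℝ) 1) :
    x / (p * x + 1 - p) ∈ Set.Icc (0:ℝ) 1 := by
  have hD := denom_pos hp hx
  constructor
  · exact div_nonneg hx.1 hD.le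
  · rw [div_le_one hD]
    nlinarith [mul_nonneg (sub_nonneg.2 hx.2) (sub_nonneg.2 hp.le)]

lemma contOn_fScalar {p : ℝ} (hp : p < 1) {s : Set ℝ} (hs : s ⊆ Set.Icc 0 1) :
    ContinuousOn (fun x : ℝ => x / (p * x + 1 - p)) s :=
  ContinuousOn.div continuousOn_id (by fun_prop) fun x hx => (denom_pos hp (hs hx)).ne'

lemma q_lt_one {p : ℝ} (hp : p < 1) : p / (p - 1) < 1 := by
  have hp1 : p - 1 ≠ 0 := by linarith
  have h2 : p / (p - 1) - 1 = 1 / (p - 1) := by field_simp; ring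
  have h3 : 1 / (p - 1) < 0 := div_neg_of_pos_of_neg one_pos (by linarith)
  linarith

lemma q_inv {p : ℝ} (hp : p < 1) : (p / (p - 1)) / ((p / (p - 1)) - 1) = p := by
  have hp1 : p - 1 ≠ 0 := by linarith
  have h2 : p / (p - 1) - 1 = 1 / (p - 1) := by
    field_simp
    ring
  rw [h2]
  field_simp

lemma comp_eq_id {p : ℝ} (hp : p < 1) {x : ℝ} (hx : x ∈ Set.Icc (0:ℝ) 1) :
    (x / (p * x + 1 - p)) /
      ((p / (p - 1)) * (x / (p * x + 1 - p)) + 1 - p / (p - 1)) = x := by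
  have hD := denom_pos hp hx
  have hp1 : p - 1 ≠ 0 := by linarith
  have key : (p / (p - 1)) * (x / (p * x + 1 - p)) + 1 - p / (p - 1)
      = 1 / (p * x + 1 - p) := by
    field_simp
    ring
  rw [key]
  field_simp
  exact mul_div_cancel_right₀ x (by rw [mul_comm]; exact hD.ne')

section Op

variable {H : Type*} [NormedAddCommGroup H] [InnerProductSpace ℂ H] [CompleteSpace H]

lemma spectrum_subset {A : H →L[ℂ] H} (hA : IsSelfAdjoint A ∧ 0 ≤ A ∧ A ≤ 1) :
    spectrum ℝ A ⊆ Set.Icc 0 1 := fun x hx =>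
  ⟨spectrum_nonneg_of_nonneg hA.2.1 hx, (CFC.le_one_iff (R := ℝ) A hA.1).1 hA.2.2 x hx⟩

lemma fOp_mem {p : ℝ} (hp : p < 1) {A : H →L[ℂ] H}
    (hA : A ∈ {A : H →L[ℂ] H | IsSelfAdjoint A ∧ 0 ≤ A ∧ A ≤ 1}) :
    fOp p A ∈ {A : H →L[ℂ] H | IsSelfAdjoint A ∧ 0 ≤ A ∧ A ≤ 1} := by
  have hspec := spectrum_subset hA
  have hf : ContinuousOn (fun x : ℝ => x / (p * x + 1 - p)) (spectrum ℝ A) :=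
    contOn_fScalar hp hspec
  refine ⟨cfc_predicate _ A, ?_, ?_⟩
  · exact cfc_nonneg fun x hx => (fScalar_mem hp (hspec hx)).1
  · exact (cfc_le_one_iff _ A hf hA.1).2 fun x hx => (fScalar_mem hp (hspec hx)).2

lemma fOp_comp {p : ℝ} (hp : p < 1) {A : H →L[ℂ] H}
    (hA : A ∈ {A : H →L[ℂ] H | IsSelfAdjoint A ∧ 0 ≤ A ∧ A ≤ 1}) :
    fOp (p / (p - 1)) (fOp p A) = A := by
  have hspec := spectrum_subset hA
  have hq : p / (p - 1) < 1 := q_lt_one hp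
  have himg : (fun x : ℝ => x / (p * x + 1 - p)) '' spectrum ℝ A ⊆ Set.Icc 0 1 := by
    rintro y ⟨x, hx, rfl⟩
    exact fScalar_mem hp (hspec hx)
  rw [fOp, fOp, ← cfc_comp' (fun x : ℝ => x / ((p / (p - 1)) * x + 1 - p / (p - 1)))
    (fun x : ℝ => x / (p * x + 1 - p)) A (contOn_fScalar hq himg) (contOn_fScalar hp hspec) hA.1]
  rw [cfc_congr (g := fun x : ℝ => x) fun x hx => comp_eq_id hp (hspec hx)]
  exact cfc_id' ℝ A hA.1

lemma contOn_fOp {p : ℝ} (hp : p < 1) :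
    ContinuousOn (fOp p) {A : H →L[ℂ] H | IsSelfAdjoint A ∧ 0 ≤ A ∧ A ≤ 1} := by
  rw [Metric.continuousOn_iff]
  intro A hA ε hε
  obtain ⟨poly, hpoly⟩ := exists_polynomial_near_of_continuousOn 0 1
    (fun x : ℝ => x / (p * x + 1 - p)) (contOn_fScalar hp subset_rfl) (ε / 3) (by linarith)
  have key : ∀ B ∈ {A : H →L[ℂ] H | IsSelfAdjoint A ∧ 0 ≤ A ∧ A ≤ 1},
      ‖fOp p B - Polynomial.aeval B poly‖ ≤ ε / 3 := by
    intro B hB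
    have hspec := spectrum_subset hB
    have hf : ContinuousOn (fun x : ℝ => x / (p * x + 1 - p)) (spectrum ℝ B) :=
      contOn_fScalar hp hspec
    have h1 : (Polynomial.aeval B poly : H →L[ℂ] H)
        = cfc (fun x : ℝ => Polynomial.eval x poly) B :=
      (cfc_polynomial poly B hB.1).symm
    rw [fOp, h1, ← cfc_sub (fun x : ℝ => x / (p * x + 1 - p))
      (fun x : ℝ => Polynomial.eval x poly) B hf (by fun_prop)]
    refine norm_cfc_le (by positivity) fun x hx => ?_
    have h2 := hpoly x (hspec hx)
    rw [abs_sub_comm] at h2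
    rw [Real.norm_eq_abs]
    exact h2.le
  have hcont : Continuous fun B : H →L[ℂ] H => (Polynomial.aeval B poly : H →L[ℂ] H) :=
    poly.continuous_aeval
  obtain ⟨δ, hδ, hδ'⟩ := Metric.continuous_iff.mp hcont A (ε / 3) (by linarith)
  refine ⟨δ, hδ, fun B hB hdist => ?_⟩
  have h3 := hδ' B hdist
  calc dist (fOp p B) (fOp p A)
      ≤ dist (fOp p B) (Polynomial.aeval B poly) + dist (Polynomial.aeval B poly)
          (Polynomial.aeval A poly) + dist (Polynomial.aeval A poly) (fOp p A) :=
        dist_triangle4 _ _ _ _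
    _ < ε := by
        rw [dist_eq_norm, dist_eq_norm (Polynomial.aeval A poly)]
        have k1 := key B hB
        have k2 := key A hA
        rw [norm_sub_rev] at k2
        linarith

end Op

end StmtAux

/-- For `p < 1`, `A ↦ f_p(A)` is a homeomorphism of the effect algebra `[0, I]` onto
itself: it maps `[0, I]` bijectively onto itself, is continuous on `[0, I]`, and its
inverse `f_{p/(p-1)}` is continuous on `[0, I]`. -/
theorem stmt_10 {H : Type*} [NormedAddCommGroup H] [InnerProductSpace ℂ H] [CompleteSpace H]
    (p : ℝ) (hp : p < 1) :
    Set.BijOn (fOp p) {A : H →L[ℂ] H | IsSelfAdjoint A ∧ 0 ≤ A ∧ A ≤ 1} {A : H →L[ℂ] H | IsSelfAdjoint A ∧ 0 ≤ A ∧ A ≤ 1} ∧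
    ContinuousOn (fOp p) {A : H →L[ℂ] H | IsSelfAdjoint A ∧ 0 ≤ A ∧ A ≤ 1} ∧
    ContinuousOn (fOp (p / (p - 1))) {A : H →L[ℂ] H | IsSelfAdjoint A ∧ 0 ≤ A ∧ A ≤ 1} ∧
    ∀ A ∈ {A : H →L[ℂ] H | IsSelfAdjoint A ∧ 0 ≤ A ∧ A ≤ 1}, fOp (p / (p - 1)) (fOp p A) = A := by
  have hq : p / (p - 1) < 1 := StmtAux.q_lt_one hp
  refine ⟨?_, StmtAux.contOn_fOp hp, StmtAux.contOn_fOp hq, fun A hA => StmtAux.fOp_comp hp hA⟩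
  refine Set.InvOn.bijOn ⟨fun A hA => StmtAux.fOp_comp hp hA, fun A hA => ?_⟩
    (fun A hA => StmtAux.fOp_mem hp hA) (fun A hA => StmtAux.fOp_mem hq hA)
  have := StmtAux.fOp_comp hq hA
  rwa [StmtAux.q_inv hp] at this
end

section
/- If φ : [0, I] → [0, I] is an order automorphism of the effect algebra, then φ maps the set (0, I] = {A : 0 < A ≤ I, A invertible} onto itself. -/
set_option linter.unusedSectionVars false
set_option maxHeartbeats 800000


open ContinuousLinearMap RCLike

section EffectAux
variable {H : Type*} [NormedAddCommGroup H] [InnerProductSpace ℂ H] [CompleteSpace H]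
local notation "⟪" x ", " y "⟫" => @inner ℂ _ _ x y

lemma sa_inner {S : H →L[ℂ] H} (hS : IsSelfAdjoint S) (u v : H) : ⟪S u, v⟫ = ⟪u, S v⟫ := by
  nth_rewrite 1 [← hS.adjoint_eq]
  exact adjoint_inner_left _ _ _

noncomputable def opSqrt (A : H →L[ℂ] H) : H →L[ℂ] H := cfc Real.sqrt A

lemma opSqrt_sa (A : H →L[ℂ] H) : IsSelfAdjoint (opSqrt A) := cfc_predicate _ _

lemma opSqrt_mul_self (A : H →L[ℂ] H) (hA : 0 ≤ A) : opSqrt A * opSqrt A = A := by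
  rw [opSqrt, ← cfc_mul ..]
  conv_rhs => rw [← cfc_id ℝ A]
  apply cfc_congr
  intro x hx
  have := spectrum_nonneg_of_nonneg hA hx
  simp [Real.mul_self_sqrt this]

lemma inner_eq_normSq (A : H →L[ℂ] H) (hA : 0 ≤ A) (x : H) :
    re ⟪A x, x⟫ = ‖opSqrt A x‖ ^ 2 := by
  conv_lhs => rw [← opSqrt_mul_self A hA]
  rw [ContinuousLinearMap.mul_apply, sa_inner (opSqrt_sa A), ← inner_self_eq_norm_sq (𝕜 := ℂ)]

lemma le_inner {A B : H →L[ℂ] H} (h : A ≤ B) (x : H) : re ⟪A x, x⟫ ≤ re ⟪B x, x⟫ := by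
  have := ((le_def A B).mp h).re_inner_nonneg_left x
  rw [sub_apply, inner_sub_left, map_sub] at this
  linarith

lemma le_of_inner {A B : H →L[ℂ] H} (hA : IsSelfAdjoint A) (hB : IsSelfAdjoint B)
    (h : ∀ x, re ⟪A x, x⟫ ≤ re ⟪B x, x⟫) : A ≤ B := by
  rw [le_def]
  refine ⟨(hB.sub hA).isSymmetric, fun x => ?_⟩
  rw [reApplyInnerSelf_apply, sub_apply, inner_sub_left, map_sub]
  have := h x
  linarith

lemma apply_eq_zero_of_inner_zero {C : H →L[ℂ] H} (hC : 0 ≤ C) (x : H)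
    (h : re ⟪C x, x⟫ = 0) : C x = 0 := by
  have h2 := inner_eq_normSq C hC x
  rw [h] at h2
  have h3 : opSqrt C x = 0 := norm_eq_zero.mp (sq_eq_zero_iff.mp h2.symm)
  have : C x = opSqrt C (opSqrt C x) := by
    rw [← ContinuousLinearMap.mul_apply, opSqrt_mul_self C hC]
  rw [this, h3, map_zero]

noncomputable def rankOne (y : H) : H →L[ℂ] H := (innerSL ℂ y).smulRight y

lemma rankOne_apply (y x : H) : rankOne y x = ⟪y, x⟫ • y := rfl

lemma rankOne_sa (y : H) : IsSelfAdjoint (rankOne y) := by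
  rw [isSelfAdjoint_iff_isSymmetric]
  intro u v
  rw [coe_coe, rankOne_apply, rankOne_apply, inner_smul_left, inner_smul_right,
    ← inner_conj_symm y u]
  simp only [starRingEnd_self_apply]
  ring

lemma rankOne_re_inner (y x : H) : re ⟪rankOne y x, x⟫ = ‖⟪y, x⟫‖ ^ 2 := by
  rw [rankOne_apply, inner_smul_left, RCLike.conj_mul]
  norm_cast

lemma rankOne_nonneg (y : H) : 0 ≤ rankOne y := by
  rw [nonneg_iff_isPositive]
  refine ⟨(rankOne_sa y).isSymmetric, fun x => ?_⟩
  rw [reApplyInnerSelf_apply, rankOne_re_inner]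
  positivity

lemma re_inner_one (x : H) : re ⟪(1 : H →L[ℂ] H) x, x⟫ = ‖x‖ ^ 2 := by
  rw [ContinuousLinearMap.one_apply, ← inner_self_eq_norm_sq (𝕜 := ℂ)]

lemma rankOne_le_one (y : H) (hy : ‖y‖ = 1) : rankOne y ≤ 1 := by
  apply le_of_inner (rankOne_sa y) (IsSelfAdjoint.one _)
  intro x
  rw [rankOne_re_inner, re_inner_one]
  calc ‖⟪y, x⟫‖ ^ 2 ≤ (‖y‖ * ‖x‖) ^ 2 := by
        apply pow_le_pow_left₀ (norm_nonneg _) (norm_inner_le_norm _ _)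
      _ = ‖x‖ ^ 2 := by rw [hy, one_mul]

lemma sa_real_smul {P : H →L[ℂ] H} (hP : IsSelfAdjoint P) (δ : ℝ) :
    IsSelfAdjoint (δ • P) :=
  IsSelfAdjoint.smul (star_trivial δ) hP

lemma re_inner_real_smul (δ : ℝ) (u x : H) : re ⟪δ • u, x⟫ = δ * re ⟪u, x⟫ := by
  rw [RCLike.real_smul_eq_coe_smul (K := ℂ), inner_smul_left, RCLike.conj_ofReal,
    RCLike.re_ofReal_mul]

lemma smul_le_smul_clm {P Q : H →L[ℂ] H} (hP : IsSelfAdjoint P) (hQ : IsSelfAdjoint Q)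
    (h : P ≤ Q) {δ : ℝ} (hδ : 0 ≤ δ) : δ • P ≤ δ • Q := by
  apply le_of_inner (sa_real_smul hP δ) (sa_real_smul hQ δ)
  intro x
  rw [smul_apply, smul_apply, re_inner_real_smul, re_inner_real_smul]
  exact mul_le_mul_of_nonneg_left (le_inner h x) hδ

lemma smul_le_smul_clm' {P : H →L[ℂ] H} (hP : 0 ≤ P) (hPsa : IsSelfAdjoint P) {δ c : ℝ}
    (h : δ ≤ c) : δ • P ≤ c • P := by
  apply le_of_inner (sa_real_smul hPsa δ) (sa_real_smul hPsa c)
  intro x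
  rw [smul_apply, smul_apply, re_inner_real_smul, re_inner_real_smul]
  have h0 : 0 ≤ re ⟪P x, x⟫ := by simpa using le_inner hP x
  exact mul_le_mul_of_nonneg_right h h0

lemma one_ne_zero_clm [Nontrivial H] : (1 : H →L[ℂ] H) ≠ 0 := by
  obtain ⟨x, hx⟩ := exists_ne (0 : H)
  intro h
  apply hx
  have := congrArg (fun T : H →L[ℂ] H => T x) h
  simpa using this

lemma opSqrt_isUnit (A : H →L[ℂ] H) (hA : 0 ≤ A) (hU : IsUnit A) : IsUnit (opSqrt A) := by
  have hbij := isUnit_iff_bijective.mp hU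
  have hmul : opSqrt A * opSqrt A = A := opSqrt_mul_self A hA
  have hsurj : Function.Surjective (opSqrt A) := by
    intro u
    obtain ⟨x, hx⟩ := hbij.2 u
    exact ⟨opSqrt A x, by rw [← ContinuousLinearMap.mul_apply, hmul, hx]⟩
  have hinj : Function.Injective (opSqrt A) := by
    intro a b hab
    apply hbij.1
    show A a = A b
    rw [← hmul, ContinuousLinearMap.mul_apply, ContinuousLinearMap.mul_apply, hab]
  exact isUnit_iff_bijective.mpr ⟨hinj, hsurj⟩

lemma unit_bounded_below [Nontrivial H] (A : H →L[ℂ] H) (hA : 0 ≤ A) (hU : IsUnit A) :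
    ∃ ε : ℝ, 0 < ε ∧ ∀ x, ε * ‖x‖ ^ 2 ≤ re ⟪A x, x⟫ := by
  obtain ⟨u, hu⟩ := opSqrt_isUnit A hA hU
  have hTS : (↑u⁻¹ : H →L[ℂ] H) * opSqrt A = 1 := by
    rw [← hu]; exact u.inv_mul
  set T := (↑u⁻¹ : H →L[ℂ] H)
  have hT : 0 < ‖T‖ := norm_pos_iff.mpr (by
    intro h0
    rw [h0, zero_mul] at hTS
    exact one_ne_zero_clm hTS.symm)
  refine ⟨(‖T‖⁻¹) ^ 2, by positivity, fun x => ?_⟩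
  rw [inner_eq_normSq A hA]
  calc ‖T‖⁻¹ ^ 2 * ‖x‖ ^ 2 = (‖T‖⁻¹ * ‖x‖) ^ 2 := by ring
    _ ≤ ‖opSqrt A x‖ ^ 2 := by
        apply pow_le_pow_left₀ (by positivity)
        · have h1 : ‖x‖ = ‖T (opSqrt A x)‖ := by rw [← ContinuousLinearMap.mul_apply, hTS, ContinuousLinearMap.one_apply]
          have h2 : ‖T (opSqrt A x)‖ ≤ ‖T‖ * ‖opSqrt A x‖ := le_opNorm _ _
          rw [inv_mul_le_iff₀ hT]
          calc ‖x‖ = ‖T (opSqrt A x)‖ := h1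
            _ ≤ ‖T‖ * ‖opSqrt A x‖ := h2

/-- key easy-direction fact: a nonzero effect dominates a positive multiple of a
rank one projection -/
lemma exists_rankOne_le (B : H →L[ℂ] H) (hB0 : 0 ≤ B) (hBne : B ≠ 0) :
    ∃ (y : H) (c : ℝ), ‖y‖ = 1 ∧ 0 < c ∧ c • rankOne y ≤ B := by
  set R := opSqrt B
  have hRsa := opSqrt_sa B
  have hRne : R ≠ 0 := by
    intro h0
    apply hBne
    rw [← opSqrt_mul_self B hB0]
    show R * R = 0
    rw [h0, mul_zero]
  obtain ⟨U, hU⟩ : ∃ U, R U ≠ 0 := by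
    by_contra hc
    push_neg at hc
    exact hRne (ext fun z => by rw [hc z]; rfl)
  have hnorm : 0 < ‖R U‖ := norm_pos_iff.mpr hU
  have hUnorm : 0 < ‖U‖ := norm_pos_iff.mpr (by rintro rfl; simp at hU)
  refine ⟨‖R U‖⁻¹ • R U, ‖R U‖ ^ 2 / ‖U‖ ^ 2, ?_, by positivity, ?_⟩
  · rw [norm_smul]
    simp [hnorm.ne']
  · set y := ‖R U‖⁻¹ • R U
    apply le_of_inner (sa_real_smul (rankOne_sa y) _) (IsSelfAdjoint.of_nonneg hB0)
    intro x
    rw [smul_apply, re_inner_real_smul, rankOne_re_inner, inner_eq_normSq B hB0]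
    have hyx : ⟪y, x⟫ = ((‖R U‖⁻¹ : ℝ) : ℂ) * ⟪U, R x⟫ := by
      show ⟪(‖R U‖⁻¹ : ℝ) • R U, x⟫ = _
      rw [RCLike.real_smul_eq_coe_smul (K := ℂ), inner_smul_left, RCLike.conj_ofReal,
        sa_inner hRsa]
      rfl
    have hyxnorm : ‖⟪y, x⟫‖ = ‖R U‖⁻¹ * ‖⟪U, R x⟫‖ := by
      rw [hyx, norm_mul]
      congr 1
      rw [Complex.norm_real, Real.norm_eq_abs, abs_of_nonneg (by positivity)]
    have hcs : ‖⟪U, R x⟫‖ ≤ ‖U‖ * ‖R x‖ := norm_inner_le_norm _ _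
    have hcs2 : ‖⟪U, R x⟫‖ ^ 2 ≤ (‖U‖ * ‖R x‖) ^ 2 :=
      pow_le_pow_left₀ (norm_nonneg _) hcs 2
    rw [hyxnorm]
    rw [div_mul_eq_mul_div, div_le_iff₀ (by positivity)]
    calc ‖R U‖ ^ 2 * (‖R U‖⁻¹ * ‖⟪U, R x⟫‖) ^ 2
        = ‖⟪U, R x⟫‖ ^ 2 * (‖R U‖ ^ 2 * (‖R U‖⁻¹)^2) := by ring
      _ = ‖⟪U, R x⟫‖ ^ 2 := by
          rw [← mul_pow, mul_inv_cancel₀ hnorm.ne']; ring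
      _ ≤ (‖U‖ * ‖R x‖) ^ 2 := hcs2
      _ = ‖R x‖ ^ 2 * ‖U‖ ^ 2 := by ring

lemma zero_le_smul_rankOne (y : H) {d : ℝ} (hd : 0 ≤ d) : 0 ≤ d • rankOne y := by
  have := smul_le_smul_clm' (rankOne_nonneg y) (rankOne_sa y) hd
  rwa [zero_smul] at this

lemma smul_one_le (A : H →L[ℂ] H) (hAsa : IsSelfAdjoint A) {e : ℝ}
    (h : ∀ x, e * ‖x‖ ^ 2 ≤ re ⟪A x, x⟫) : e • (1 : H →L[ℂ] H) ≤ A := by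
  apply le_of_inner (sa_real_smul (IsSelfAdjoint.one _) e) hAsa
  intro x
  rw [smul_apply, re_inner_real_smul, re_inner_one]
  exact h x

lemma unit_meets [Nontrivial H] {A B : H →L[ℂ] H} (hA0 : 0 ≤ A) (hAU : IsUnit A)
    (hB0 : 0 ≤ B) (hB1 : B ≤ 1) (hBne : B ≠ 0) :
    ∃ C : H →L[ℂ] H, (IsSelfAdjoint C ∧ 0 ≤ C ∧ C ≤ 1) ∧ C ≠ 0 ∧ C ≤ A ∧ C ≤ B := by
  obtain ⟨ε, hε, hbound⟩ := unit_bounded_below A hA0 hAU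
  obtain ⟨y, c, hy, hc, hcB⟩ := exists_rankOne_le B hB0 hBne
  set δ := min ε c with hδdef
  have hδ : 0 < δ := lt_min hε hc
  refine ⟨δ • rankOne y, ⟨sa_real_smul (rankOne_sa y) δ, zero_le_smul_rankOne y hδ.le, ?_⟩,
    ?_, ?_, ?_⟩
  · -- C ≤ 1 via C ≤ B ≤ 1
    calc δ • rankOne y ≤ c • rankOne y :=
          smul_le_smul_clm' (rankOne_nonneg y) (rankOne_sa y) (min_le_right _ _)
      _ ≤ B := hcB
      _ ≤ 1 := hB1
  · intro h0
    have := congrArg (fun T : H →L[ℂ] H => T y) h0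
    have hy0 : y ≠ 0 := by
      intro h; rw [h, norm_zero] at hy; exact (zero_ne_one hy : False)
    simp only [smul_apply, rankOne_apply, zero_apply] at this
    rw [inner_self_eq_norm_sq_to_K (𝕜 := ℂ), hy] at this
    norm_num at this
    rcases this with h | h
    · exact hδ.ne' h
    · exact hy0 h
  · calc δ • rankOne y ≤ δ • (1 : H →L[ℂ] H) :=
          smul_le_smul_clm (rankOne_sa y) (IsSelfAdjoint.one _) (rankOne_le_one y hy) hδ.le
      _ ≤ ε • (1 : H →L[ℂ] H) := by
          apply smul_le_smul_clm' _ (IsSelfAdjoint.one _) (min_le_left _ _)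
          rw [nonneg_iff_isPositive]; exact isPositive_one
      _ ≤ A := smul_one_le A (IsSelfAdjoint.of_nonneg hA0) hbound
  · calc δ • rankOne y ≤ c • rankOne y :=
          smul_le_smul_clm' (rankOne_nonneg y) (rankOne_sa y) (min_le_right _ _)
      _ ≤ B := hcB

lemma not_unit_exists_not_in_range {A : H →L[ℂ] H} (hA0 : 0 ≤ A) (hnu : ¬ IsUnit A) :
    ∃ y : H, ‖y‖ = 1 ∧ y ∉ LinearMap.range (opSqrt A : H →ₗ[ℂ] H) := by
  set S := opSqrt A with hSdef
  have hSsa := opSqrt_sa A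
  have hnotsurj : ¬ Function.Surjective S := by
    intro hsurj
    apply hnu
    have hinj : Function.Injective S := by
      intro u v huv
      have h0 : S (u - v) = 0 := by rw [map_sub, huv, sub_self]
      have : ∀ w, ⟪w, u - v⟫ = 0 := by
        intro w
        obtain ⟨x, hx⟩ := hsurj w
        rw [← hx, sa_inner hSsa, h0, inner_zero_right]
      have := this (u - v)
      rw [inner_self_eq_zero] at this
      exact sub_eq_zero.mp this
    have hSU : IsUnit S := isUnit_iff_bijective.mpr ⟨hinj, hsurj⟩
    have : S * S = A := opSqrt_mul_self A hA0
    rw [← this]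
    exact hSU.mul hSU
  rw [Function.Surjective] at hnotsurj
  push_neg at hnotsurj
  obtain ⟨y₀, hy₀⟩ := hnotsurj
  have hy₀ne : y₀ ≠ 0 := by
    rintro rfl
    exact hy₀ 0 (map_zero S)
  have hn : 0 < ‖y₀‖ := norm_pos_iff.mpr hy₀ne
  refine ⟨‖y₀‖⁻¹ • y₀, by rw [norm_smul]; simp [hn.ne'], ?_⟩
  rintro ⟨z, hz⟩
  apply hy₀ (‖y₀‖ • z)
  have : (‖y₀‖ : ℝ) • S z = (‖y₀‖ : ℝ) • (‖y₀‖⁻¹ • y₀) := congrArg (fun v => (‖y₀‖ : ℝ) • v) hz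
  rw [smul_smul, mul_inv_cancel₀ hn.ne', one_smul] at this
  rw [map_smul_of_tower, this]

lemma le_rankOne_decomp {C : H →L[ℂ] H} {y : H} (hy : ‖y‖ = 1) (hC0 : 0 ≤ C)
    (hC : C ≤ rankOne y) (hCne : C ≠ 0) : ∃ t : ℝ, 0 < t ∧ C = t • rankOne y := by
  have hCsa : IsSelfAdjoint C := IsSelfAdjoint.of_nonneg hC0
  have hyy : ⟪y, y⟫ = 1 := by
    rw [inner_self_eq_norm_sq_to_K (𝕜 := ℂ), hy]; norm_num
  have hker : ∀ x, ⟪y, x⟫ = 0 → C x = 0 := by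
    intro x hx
    apply apply_eq_zero_of_inner_zero hC0
    have h1 := le_inner hC x
    rw [rankOne_re_inner, hx] at h1
    have h2 : 0 ≤ re ⟪C x, x⟫ := by simpa using le_inner hC0 x
    simp only [norm_zero] at h1
    nlinarith
  have hyw : ⟪y, C y - ⟪y, C y⟫ • y⟫ = 0 := by
    rw [inner_sub_right, inner_smul_right, hyy, mul_one, sub_self]
  have hCw : C (C y - ⟪y, C y⟫ • y) = 0 := hker _ hyw
  have hwy : ⟪C y - ⟪y, C y⟫ • y, y⟫ = 0 := by
    rw [← inner_conj_symm, hyw, map_zero]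
  have hwCy : ⟪C y - ⟪y, C y⟫ • y, C y⟫ = 0 := by
    rw [← sa_inner hCsa (C y - ⟪y, C y⟫ • y) y, hCw, inner_zero_left]
  have hww : ⟪C y - ⟪y, C y⟫ • y, C y - ⟪y, C y⟫ • y⟫ = 0 := by
    rw [inner_sub_right, inner_smul_right, hwCy, hwy, mul_zero, sub_zero]
  have hCy : C y = ⟪y, C y⟫ • y := sub_eq_zero.mp (inner_self_eq_zero.mp hww)
  have hsym : ⟪C y, y⟫ = ⟪y, C y⟫ := sa_inner hCsa y y
  have hconj : (starRingEnd ℂ) ⟪y, C y⟫ = ⟪y, C y⟫ := by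
    rw [inner_conj_symm, hsym]
  set t := re ⟪y, C y⟫ with ht
  have htreal : ⟪y, C y⟫ = (t : ℂ) := ((RCLike.conj_eq_iff_re).mp hconj).symm
  have ht0 : 0 ≤ t := by
    have := le_inner hC0 y
    simp only [zero_apply, inner_zero_left, map_zero] at this
    rw [ht, ← hsym]
    exact this
  have hCeq : C = t • rankOne y := by
    ext x
    have hx' : ⟪y, x - ⟪y, x⟫ • y⟫ = 0 := by
      rw [inner_sub_right, inner_smul_right, hyy, mul_one, sub_self]
    have h0 := hker _ hx'
    rw [map_sub, map_smul, sub_eq_zero] at h0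
    rw [h0, hCy, htreal, smul_apply, rankOne_apply,
      RCLike.real_smul_eq_coe_smul (K := ℂ) t, smul_smul, smul_smul, mul_comm]
    rfl
  refine ⟨t, ?_, hCeq⟩
  rcases lt_or_eq_of_le ht0 with h | h
  · exact h
  · exact absurd (by rw [hCeq, ← h, zero_smul]) hCne

lemma rankOne_le_mem_range {A : H →L[ℂ] H} (hA0 : 0 ≤ A) {y : H} {t : ℝ} (ht : 0 < t)
    (hle : t • rankOne y ≤ A) : ∃ z, opSqrt A z = y := by
  have hSsa := opSqrt_sa A
  set S := opSqrt A with hSdef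
  have hst : 0 < Real.sqrt t := Real.sqrt_pos.mpr ht
  have hbound : ∀ x, Real.sqrt t * ‖⟪y, x⟫‖ ≤ ‖S x‖ := by
    intro x
    have h1 := le_inner hle x
    rw [smul_apply, re_inner_real_smul, rankOne_re_inner, inner_eq_normSq A hA0] at h1
    have h2 : (Real.sqrt t * ‖⟪y, x⟫‖) ^ 2 ≤ ‖S x‖ ^ 2 := by
      rw [mul_pow, Real.sq_sqrt ht.le]; exact h1
    have h3 := Real.sqrt_le_sqrt h2
    rwa [Real.sqrt_sq (by positivity), Real.sqrt_sq (norm_nonneg _)] at h3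
  have hbound' : ∀ x, ‖⟪y, x⟫‖ ≤ (Real.sqrt t)⁻¹ * ‖S x‖ := by
    intro x
    have := mul_le_mul_of_nonneg_left (hbound x) (le_of_lt (inv_pos.mpr hst))
    rwa [← mul_assoc, inv_mul_cancel₀ hst.ne', one_mul] at this
  -- spectrum of A is nonnegative
  have hspec : ∀ s ∈ spectrum ℝ A, 0 ≤ s := fun s hs => spectrum_nonneg_of_nonneg hA0 hs
  -- function families
  set a : ℕ → ℝ := fun n => ((n : ℝ) + 1)⁻¹ with ha_def
  set g : ℕ → ℝ → ℝ := fun n s => (Real.sqrt s + a n)⁻¹ with hg_def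
  have hapos : ∀ n, 0 < a n := fun n => by positivity
  have hdenpos : ∀ n s, 0 < Real.sqrt s + a n := fun n s =>
    add_pos_of_nonneg_of_pos (Real.sqrt_nonneg s) (hapos n)
  have hgpos : ∀ n s, 0 < g n s := fun n s => inv_pos.mpr (hdenpos n s)
  have hgcont : ∀ n, Continuous (g n) := fun n =>
    (Real.continuous_sqrt.add continuous_const).inv₀ (fun s => (hdenpos n s).ne')
  have hgc : ∀ n, ContinuousOn (g n) (spectrum ℝ A) := fun n => (hgcont n).continuousOn
  have hsqc : ContinuousOn Real.sqrt (spectrum ℝ A) := Real.continuous_sqrt.continuousOn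
  set G : ℕ → H →L[ℂ] H := fun n => cfc (g n) A with hG_def
  set z : ℕ → H := fun n => G n y with hz_def
  have hGsa : ∀ n, IsSelfAdjoint (G n) := fun n => cfc_predicate _ _
  -- S * G n = cfc (√ * g n)
  have hSG : ∀ n, S * G n = cfc (fun s => Real.sqrt s * g n s) A := fun n =>
    (cfc_mul _ _ A hsqc (hgc n)).symm
  have hGS : ∀ n, G n * S = cfc (fun s => g n s * Real.sqrt s) A := fun n =>
    (cfc_mul _ _ A (hgc n) hsqc).symm
  -- the basic function identity
  have hfun : ∀ n s, Real.sqrt s * g n s = 1 - a n * g n s := by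
    intro n s
    have hd := (hdenpos n s).ne'
    rw [hg_def]
    field_simp
    ring
  -- S z n - y = -(a n • z n)
  have hkey : ∀ n, S (z n) - y = -(a n • z n) := by
    intro n
    have h1 : S (z n) = (S * G n) y := rfl
    rw [h1, hSG n]
    have h2 : cfc (fun s => Real.sqrt s * g n s) A
        = 1 - a n • G n := by
      have : cfc (fun s => Real.sqrt s * g n s) A = cfc (fun s => 1 - a n * g n s) A :=
        cfc_congr (fun s _ => hfun n s)
      rw [this, cfc_sub _ _ A (by fun_prop) (by fun_prop)]
      congr 1
      · exact cfc_one ℝ A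
      · exact cfc_const_mul (a n) (g n) A (hgc n)
    rw [h2, sub_apply, ContinuousLinearMap.one_apply, smul_apply]
    show y - a n • (G n y) - y = -(a n • (G n y))
    abel
  -- norm estimates for the multiplier operators
  have hq_le : ∀ n, ‖cfc (fun s => Real.sqrt s * g n s) A‖ ≤ 1 := by
    intro n
    apply norm_cfc_le zero_le_one
    intro s hs
    have h0 := hdenpos n s
    have h1 : Real.sqrt s * g n s = Real.sqrt s / (Real.sqrt s + a n) := by
      rw [hg_def, div_eq_mul_inv]
    rw [Real.norm_eq_abs, h1, abs_of_nonneg (by positivity)]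
    rw [div_le_one h0]
    linarith [(hapos n)]
  have hq_le' : ∀ n, ‖cfc (fun s => g n s * Real.sqrt s) A‖ ≤ 1 := by
    intro n
    have : (fun s => g n s * Real.sqrt s) = (fun s => Real.sqrt s * g n s) := by
      funext s; ring
    rw [this]
    exact hq_le n
  have hG_le : ∀ n, ‖G n‖ ≤ (n : ℝ) + 1 := by
    intro n
    apply norm_cfc_le (by positivity)
    intro s hs
    rw [Real.norm_eq_abs, abs_of_nonneg (hgpos n s).le]
    rw [hg_def]
    have h1 : a n ≤ Real.sqrt s + a n := le_add_of_nonneg_left (Real.sqrt_nonneg s)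
    have := inv_anti₀ (hapos n) h1
    rwa [ha_def, inv_inv] at this
  -- y is in the closure of the range of S
  have hyclosure : y ∈ closure (LinearMap.range (S : H →ₗ[ℂ] H) : Set H) := by
    have hsub : y ∈ ((LinearMap.range (S : H →ₗ[ℂ] H))ᗮ)ᗮ := by
      rw [Submodule.mem_orthogonal]
      intro x hx
      have hSx : S x = 0 := by
        have h1 : ⟪S x, S x⟫ = 0 := by
          rw [sa_inner hSsa]
          have : S (S x) ∈ LinearMap.range (S : H →ₗ[ℂ] H) := LinearMap.mem_range_self _ _
          have h2 := (Submodule.mem_orthogonal _ x).mp hx _ this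
          rw [← inner_conj_symm, h2, map_zero]
        exact inner_self_eq_zero.mp h1
      have h3 := hbound x
      rw [hSx, norm_zero, mul_comm] at h3
      have h4 : ‖⟪y, x⟫‖ = 0 := le_antisymm (by nlinarith) (norm_nonneg _)
      have h5 : ⟪y, x⟫ = 0 := norm_eq_zero.mp h4
      rw [← inner_conj_symm, h5, map_zero]
    rw [Submodule.orthogonal_orthogonal_eq_closure] at hsub
    rw [← Submodule.topologicalClosure_coe]
    exact hsub
  have ha_anti : ∀ {p q : ℕ}, p ≤ q → a q ≤ a p := by
    intro p q h
    apply inv_anti₀ (by positivity)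
    have := (Nat.cast_le (α := ℝ)).mpr h
    linarith
  -- S (z n) tends to y
  have htendS : Filter.Tendsto (fun n => S (z n)) Filter.atTop (nhds y) := by
    rw [Metric.tendsto_atTop]
    intro ε hε
    obtain ⟨w', hw'mem, hw'⟩ := Metric.mem_closure_iff.mp hyclosure (ε/2) (by positivity)
    rw [SetLike.mem_coe] at hw'mem
    obtain ⟨w, rfl⟩ := hw'mem
    obtain ⟨N, hN⟩ := exists_nat_gt (2 * ‖w‖ / ε)
    refine ⟨N, fun n hn => ?_⟩
    rw [dist_eq_norm, hkey n, norm_neg, norm_smul, Real.norm_eq_abs,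
      abs_of_nonneg (hapos n).le]
    have hsplit : z n = G n (y - S w) + (G n * S) w := by
      rw [ContinuousLinearMap.mul_apply, ← map_add, sub_add_cancel]
    have e1 : ‖z n‖ ≤ ((n : ℝ) + 1) * ‖y - S w‖ + ‖(G n * S) w‖ := by
      rw [hsplit]
      refine le_trans (norm_add_le _ _) (add_le_add ?_ le_rfl)
      calc ‖G n (y - S w)‖ ≤ ‖G n‖ * ‖y - S w‖ := le_opNorm _ _
        _ ≤ ((n : ℝ) + 1) * ‖y - S w‖ :=
            mul_le_mul_of_nonneg_right (hG_le n) (norm_nonneg _)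
    have e2 : ‖(G n * S) w‖ ≤ ‖w‖ := by
      rw [hGS n]
      calc ‖(cfc (fun s => g n s * Real.sqrt s) A) w‖
          ≤ ‖cfc (fun s => g n s * Real.sqrt s) A‖ * ‖w‖ := le_opNorm _ _
        _ ≤ 1 * ‖w‖ := mul_le_mul_of_nonneg_right (hq_le' n) (norm_nonneg _)
        _ = ‖w‖ := one_mul _
    have e3 : a n * ‖z n‖ ≤ ‖y - S w‖ + a n * ‖w‖ := by
      have h4 : a n * (((n : ℝ) + 1) * ‖y - S w‖) = ‖y - S w‖ := by
        rw [ha_def, ← mul_assoc, inv_mul_cancel₀ (by positivity), one_mul]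
      calc a n * ‖z n‖ ≤ a n * (((n : ℝ) + 1) * ‖y - S w‖ + ‖(G n * S) w‖) :=
            mul_le_mul_of_nonneg_left e1 (hapos n).le
        _ = ‖y - S w‖ + a n * ‖(G n * S) w‖ := by rw [mul_add, h4]
        _ ≤ ‖y - S w‖ + a n * ‖w‖ :=
            add_le_add le_rfl (mul_le_mul_of_nonneg_left e2 (hapos n).le)
    have e4 : ‖y - S w‖ < ε / 2 := by rw [← dist_eq_norm]; exact hw'
    have e5 : a n * ‖w‖ < ε / 2 := by
      have h6 : 2 * ‖w‖ < (N : ℝ) * ε := by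
        rw [div_lt_iff₀ hε] at hN; exact hN
      have h7 : a n ≤ a N := ha_anti hn
      have h8 : a N * ‖w‖ < ε / 2 := by
        rw [ha_def]
        rw [inv_mul_eq_div, div_lt_iff₀ (by positivity)]
        nlinarith
      calc a n * ‖w‖ ≤ a N * ‖w‖ := mul_le_mul_of_nonneg_right h7 (norm_nonneg _)
        _ < ε / 2 := h8
    calc a n * ‖z n‖ ≤ ‖y - S w‖ + a n * ‖w‖ := e3
      _ < ε / 2 + ε / 2 := add_lt_add e4 e5
      _ = ε := by ring
  -- the doubly indexed inner products
  set c : ℕ → ℕ → ℝ := fun n m => re ⟪z n, z m⟫ with hc_def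
  have hcnn : ∀ n, c n n = ‖z n‖ ^ 2 := by
    intro n
    rw [hc_def]
    exact inner_self_eq_norm_sq (𝕜 := ℂ) (z n)
  have hc_op : ∀ n m, c n m = re ⟪y, cfc (fun s => g n s * g m s) A y⟫ := by
    intro n m
    have hGG : G n * G m = cfc (fun s => g n s * g m s) A :=
      (cfc_mul _ _ A (hgc n) (hgc m)).symm
    have h1 : ⟪z n, z m⟫ = ⟪y, (G n * G m) y⟫ := by
      rw [ContinuousLinearMap.mul_apply]
      exact sa_inner (hGsa n) y (G m y)
    rw [hc_def]
    simp only []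
    rw [h1, hGG]
  have hc_mono : ∀ k n m, k ≤ n → k ≤ m → c k k ≤ c n m := by
    intro k n m hkn hkm
    have hop : cfc (fun s => g k s * g k s) A ≤ cfc (fun s => g n s * g m s) A := by
      apply cfc_mono ?_ (((hgcont k).mul (hgcont k)).continuousOn)
        (((hgcont n).mul (hgcont m)).continuousOn)
      intro s hs
      have h1 : g k s ≤ g n s := by
        apply inv_anti₀ (hdenpos n s)
        have := ha_anti hkn
        linarith
      have h2 : g k s ≤ g m s := by
        apply inv_anti₀ (hdenpos m s)
        have := ha_anti hkm
        linarith
      exact mul_le_mul h1 h2 (hgpos k s).le (hgpos n s).le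
    rw [hc_op k k, hc_op n m]
    calc re ⟪y, (cfc (fun s => g k s * g k s) A) y⟫
        = re ⟪(cfc (fun s => g k s * g k s) A) y, y⟫ := inner_re_symm _ _
      _ ≤ re ⟪(cfc (fun s => g n s * g m s) A) y, y⟫ := le_inner hop y
      _ = re ⟪y, (cfc (fun s => g n s * g m s) A) y⟫ := inner_re_symm _ _
  have hz_bound : ∀ n, ‖z n‖ ≤ (Real.sqrt t)⁻¹ := by
    intro n
    rcases eq_or_lt_of_le (norm_nonneg (z n)) with h0 | h0
    · rw [← h0]; positivity
    · have h1 : ‖z n‖ ^ 2 = re ⟪y, G n (z n)⟫ := by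
        rw [← inner_self_eq_norm_sq (𝕜 := ℂ) (z n)]
        have : ⟪z n, z n⟫ = ⟪y, G n (z n)⟫ := sa_inner (hGsa n) y (z n)
        rw [this]
      have h2 : re ⟪y, G n (z n)⟫ ≤ ‖⟪y, G n (z n)⟫‖ := RCLike.re_le_norm _
      have h3 := hbound' (G n (z n))
      have h4 : ‖S (G n (z n))‖ ≤ ‖z n‖ := by
        have e : S (G n (z n)) = (cfc (fun s => Real.sqrt s * g n s) A) (z n) := by
          rw [← hSG n, ContinuousLinearMap.mul_apply]
        rw [e]
        calc ‖(cfc (fun s => Real.sqrt s * g n s) A) (z n)‖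
            ≤ ‖cfc (fun s => Real.sqrt s * g n s) A‖ * ‖z n‖ := le_opNorm _ _
          _ ≤ 1 * ‖z n‖ := mul_le_mul_of_nonneg_right (hq_le n) (norm_nonneg _)
          _ = ‖z n‖ := one_mul _
      have h5 : ‖z n‖ ^ 2 ≤ (Real.sqrt t)⁻¹ * ‖z n‖ := by
        calc ‖z n‖ ^ 2 = re ⟪y, G n (z n)⟫ := h1
          _ ≤ ‖⟪y, G n (z n)⟫‖ := h2
          _ ≤ (Real.sqrt t)⁻¹ * ‖S (G n (z n))‖ := h3
          _ ≤ (Real.sqrt t)⁻¹ * ‖z n‖ :=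
              mul_le_mul_of_nonneg_left h4 (by positivity)
      nlinarith
  have hcnn_bound : ∀ n, c n n ≤ ((Real.sqrt t)⁻¹) ^ 2 := by
    intro n
    rw [hcnn n]
    exact pow_le_pow_left₀ (norm_nonneg _) (hz_bound n) 2
  have hbdd : BddAbove (Set.range fun n => c n n) := by
    refine ⟨((Real.sqrt t)⁻¹) ^ 2, ?_⟩
    rintro x ⟨n, rfl⟩
    exact hcnn_bound n
  set L := ⨆ n, c n n with hL
  have hle_L : ∀ n, c n n ≤ L := fun n => le_ciSup hbdd n
  have hcau : CauchySeq z := by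
    rw [Metric.cauchySeq_iff]
    intro ε hε
    have hlt : L - ε ^ 2 / 4 < L := by nlinarith
    obtain ⟨N, hN⟩ := exists_lt_of_lt_ciSup hlt
    refine ⟨N, fun n hn m hm => ?_⟩
    rw [dist_eq_norm]
    have hexp : ‖z n - z m‖ ^ 2 = c n n + c m m - 2 * c n m := by
      rw [← inner_self_eq_norm_sq (𝕜 := ℂ) (z n - z m)]
      rw [inner_sub_left, inner_sub_right, inner_sub_right, map_sub, map_sub, map_sub]
      have hsym : re ⟪z m, z n⟫ = c n m := by
        rw [hc_def]
        exact inner_re_symm (z m) (z n)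
      have h1 : re ⟪z n, z n⟫ = c n n := rfl
      have h2 : re ⟪z m, z m⟫ = c m m := rfl
      have h3 : re ⟪z n, z m⟫ = c n m := rfl
      rw [hsym, h1, h2, h3]
      ring
    have hmn : c N N ≤ c n m := hc_mono N n m hn hm
    have h2 : ‖z n - z m‖ ^ 2 < ε ^ 2 := by
      rw [hexp]
      have := hle_L n
      have := hle_L m
      nlinarith
    exact lt_of_pow_lt_pow_left₀ 2 hε.le h2
  obtain ⟨zlim, hzlim⟩ := cauchySeq_tendsto_of_complete hcau
  have h1 : Filter.Tendsto (fun n => S (z n)) Filter.atTop (nhds (S zlim)) :=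
    (S.continuous.tendsto zlim).comp hzlim
  exact ⟨zlim, tendsto_nhds_unique h1 htendS⟩

lemma zero_le_one_clm : (0 : H →L[ℂ] H) ≤ 1 := by
  rw [nonneg_iff_isPositive]; exact isPositive_one

lemma unit_iff_meets [Nontrivial H] {A : H →L[ℂ] H}
    (hA : IsSelfAdjoint A ∧ 0 ≤ A ∧ A ≤ 1) :
    IsUnit A ↔ ∀ B : H →L[ℂ] H, (IsSelfAdjoint B ∧ 0 ≤ B ∧ B ≤ 1) → B ≠ 0 →
      ∃ C : H →L[ℂ] H, (IsSelfAdjoint C ∧ 0 ≤ C ∧ C ≤ 1) ∧ C ≠ 0 ∧ C ≤ A ∧ C ≤ B := by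
  constructor
  · intro hU B hB hBne
    exact unit_meets hA.2.1 hU hB.2.1 hB.2.2 hBne
  · intro hm
    by_contra hnu
    obtain ⟨y, hy, hynot⟩ := not_unit_exists_not_in_range hA.2.1 hnu
    have hyne : y ≠ 0 := by
      intro h0; rw [h0, norm_zero] at hy; exact zero_ne_one hy
    have hP : IsSelfAdjoint (rankOne y) ∧ 0 ≤ rankOne y ∧ rankOne y ≤ 1 :=
      ⟨rankOne_sa y, rankOne_nonneg y, rankOne_le_one y hy⟩
    have hPne : rankOne y ≠ 0 := by
      intro h0
      have := congrArg (fun T : H →L[ℂ] H => T y) h0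
      simp only [rankOne_apply, zero_apply] at this
      rw [inner_self_eq_norm_sq_to_K (𝕜 := ℂ), hy] at this
      norm_num at this
      exact hyne this
    obtain ⟨C, hC, hCne, hCA, hCB⟩ := hm (rankOne y) hP hPne
    obtain ⟨t, ht, rfl⟩ := le_rankOne_decomp hy hC.2.1 hCB hCne
    obtain ⟨z, hz⟩ := rankOne_le_mem_range hA.2.1 ht hCA
    exact hynot ⟨z, hz⟩

end EffectAux


theorem stmt_11 {H : Type*} [NormedAddCommGroup H] [InnerProductSpace ℂ H] [CompleteSpace H]
    (hdim : 2 ≤ Module.rank ℂ H)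
    (φ : (H →L[ℂ] H) → (H →L[ℂ] H))
    (hbij : Set.BijOn φ {A : H →L[ℂ] H | IsSelfAdjoint A ∧ 0 ≤ A ∧ A ≤ 1} {A : H →L[ℂ] H | IsSelfAdjoint A ∧ 0 ≤ A ∧ A ≤ 1})
    (hord : ∀ A ∈ {A : H →L[ℂ] H | IsSelfAdjoint A ∧ 0 ≤ A ∧ A ≤ 1}, ∀ B ∈ {A : H →L[ℂ] H | IsSelfAdjoint A ∧ 0 ≤ A ∧ A ≤ 1}, (A ≤ B ↔ φ A ≤ φ B)) :
    φ '' {A : H →L[ℂ] H | IsSelfAdjoint A ∧ 0 ≤ A ∧ A ≤ 1 ∧ IsUnit A} =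
      {A : H →L[ℂ] H | IsSelfAdjoint A ∧ 0 ≤ A ∧ A ≤ 1 ∧ IsUnit A} := by
  have hnt : Nontrivial H := by
    rw [← rank_pos_iff_nontrivial (R := ℂ)]
    calc (0 : Cardinal) < 2 := by norm_num
      _ ≤ Module.rank ℂ H := hdim
  set E : Set (H →L[ℂ] H) := {A : H →L[ℂ] H | IsSelfAdjoint A ∧ 0 ≤ A ∧ A ≤ 1} with hE
  have h0mem : (0 : H →L[ℂ] H) ∈ E := by
    refine ⟨IsSelfAdjoint.of_nonneg le_rfl, le_rfl, zero_le_one_clm⟩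
  have hphi0 : φ 0 = 0 := by
    have h1 : φ 0 ∈ E := hbij.mapsTo h0mem
    obtain ⟨B, hB, hB0⟩ := hbij.surjOn h0mem
    have h2 : φ 0 ≤ φ B := (hord 0 h0mem B hB).mp hB.2.1
    rw [hB0] at h2
    exact le_antisymm h2 h1.2.1
  ext D
  simp only [Set.mem_image, Set.mem_setOf_eq]
  constructor
  · rintro ⟨A, ⟨hAsa, hA0, hA1, hAU⟩, rfl⟩
    have hAmem : A ∈ E := ⟨hAsa, hA0, hA1⟩
    have hmem : φ A ∈ E := hbij.mapsTo hAmem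
    refine ⟨hmem.1, hmem.2.1, hmem.2.2, ?_⟩
    rw [unit_iff_meets ⟨hmem.1, hmem.2.1, hmem.2.2⟩]
    intro B' hB' hB'ne
    obtain ⟨B, hB, rfl⟩ := hbij.surjOn (show B' ∈ E from hB')
    have hBne : B ≠ 0 := by
      rintro rfl
      exact hB'ne hphi0
    obtain ⟨C, hC, hCne, hCA, hCB⟩ :=
      (unit_iff_meets ⟨hAsa, hA0, hA1⟩).mp hAU B hB hBne
    refine ⟨φ C, hbij.mapsTo hC, ?_, (hord C hC A hAmem).mp hCA, (hord C hC B hB).mp hCB⟩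
    intro h0
    apply hCne
    apply hbij.injOn hC h0mem
    rw [h0, hphi0]
  · rintro ⟨hDsa, hD0, hD1, hDU⟩
    have hDmem : D ∈ E := ⟨hDsa, hD0, hD1⟩
    obtain ⟨A, hA, rfl⟩ := hbij.surjOn hDmem
    refine ⟨A, ⟨hA.1, hA.2.1, hA.2.2, ?_⟩, rfl⟩
    rw [unit_iff_meets hA]
    intro B hB hBne
    have hphiBne : φ B ≠ 0 := by
      intro h0
      apply hBne
      apply hbij.injOn hB h0mem
      rw [h0, hphi0]
    obtain ⟨C', hC', hC'ne, hC'A, hC'B⟩ :=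
      (unit_iff_meets ⟨hDsa, hD0, hD1⟩).mp hDU (φ B) (hbij.mapsTo hB) hphiBne
    obtain ⟨C, hC, rfl⟩ := hbij.surjOn (show C' ∈ E from hC')
    refine ⟨C, hC, ?_, (hord C hC A hA).mpr hC'A, (hord C hC B hB).mpr hC'B⟩
    rintro rfl
    exact hC'ne hphi0
end

section
/- The map A ↦ A⁻¹ − I is an order anti-isomorphism from the operator interval (0, I] onto [0, ∞), with inverse A ↦ (I + A)⁻¹; i.e., it is a bijection and A ≤ B ⟺ B⁻¹ − I ≤ A⁻¹ − I. -/
section stmt12aux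

variable {H : Type*} [NormedAddCommGroup H] [InnerProductSpace ℂ H] [CompleteSpace H]

private lemma aux_inv_sa (u : (H →L[ℂ] H)ˣ) (h : IsSelfAdjoint (u : H →L[ℂ] H)) :
    IsSelfAdjoint (↑u⁻¹ : H →L[ℂ] H) := by
  have hu : star u = u := Units.ext (by simpa using h.star_eq)
  have h2 : star u⁻¹ = u⁻¹ := by rw [star_inv, hu]
  simpa [IsSelfAdjoint] using congrArg Units.val h2

private lemma aux_fwd_mem {A : H →L[ℂ] H}
    (h : IsSelfAdjoint A ∧ 0 ≤ A ∧ A ≤ 1 ∧ IsUnit A) :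
    IsSelfAdjoint (Ring.inverse A - 1) ∧ 0 ≤ Ring.inverse A - 1 := by
  obtain ⟨hsa, hA0, hA1, hu⟩ := h
  lift A to (H →L[ℂ] H)ˣ using hu
  rw [Ring.inverse_unit]
  exact ⟨(aux_inv_sa A hsa).sub (.one _),
    sub_nonneg.mpr ((CStarAlgebra.one_le_inv_iff_le_one hA0).mpr hA1)⟩

private lemma aux_left_inv {A : H →L[ℂ] H}
    (h : IsSelfAdjoint A ∧ 0 ≤ A ∧ A ≤ 1 ∧ IsUnit A) :
    Ring.inverse (1 + (Ring.inverse A - 1)) = A := by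
  obtain ⟨-, -, -, hu⟩ := h
  lift A to (H →L[ℂ] H)ˣ using hu
  rw [add_sub_cancel, Ring.inverse_unit, Ring.inverse_unit, inv_inv]

private lemma aux_back_mem {B : H →L[ℂ] H} (h : IsSelfAdjoint B ∧ 0 ≤ B) :
    IsSelfAdjoint (Ring.inverse (1 + B)) ∧ 0 ≤ Ring.inverse (1 + B) ∧
      Ring.inverse (1 + B) ≤ 1 ∧ IsUnit (Ring.inverse (1 + B)) := by
  obtain ⟨hsa, hB⟩ := h
  have hunit : IsUnit (1 + B) :=
    CStarAlgebra.isUnit_of_le 1 (le_add_of_nonneg_right hB)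
  obtain ⟨v, hv⟩ := hunit
  have hv1 : (1 : H →L[ℂ] H) ≤ v := hv ▸ le_add_of_nonneg_right hB
  have hv0 : (0 : H →L[ℂ] H) ≤ v := zero_le_one.trans hv1
  have hvsa : IsSelfAdjoint (v : H →L[ℂ] H) := hv ▸ (IsSelfAdjoint.one _).add hsa
  rw [← hv, Ring.inverse_unit]
  exact ⟨aux_inv_sa v hvsa, CFC.inv_nonneg_of_nonneg v hv0,
    CStarAlgebra.inv_le_one hv1, v⁻¹.isUnit⟩

private lemma aux_right_inv {B : H →L[ℂ] H} (h : IsSelfAdjoint B ∧ 0 ≤ B) :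
    Ring.inverse (Ring.inverse (1 + B)) - 1 = B := by
  obtain ⟨-, hB⟩ := h
  obtain ⟨v, hv⟩ : IsUnit (1 + B) :=
    CStarAlgebra.isUnit_of_le 1 (le_add_of_nonneg_right hB)
  rw [← hv, Ring.inverse_unit, Ring.inverse_unit, inv_inv, hv, add_sub_cancel_left]

private lemma aux_order {A B : H →L[ℂ] H}
    (hA : IsSelfAdjoint A ∧ 0 ≤ A ∧ A ≤ 1 ∧ IsUnit A)
    (hB : IsSelfAdjoint B ∧ 0 ≤ B ∧ B ≤ 1 ∧ IsUnit B) :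
    A ≤ B ↔ Ring.inverse B - 1 ≤ Ring.inverse A - 1 := by
  obtain ⟨-, hA0, -, hAu⟩ := hA
  obtain ⟨-, hB0, -, hBu⟩ := hB
  lift A to (H →L[ℂ] H)ˣ using hAu
  lift B to (H →L[ℂ] H)ˣ using hBu
  rw [Ring.inverse_unit, Ring.inverse_unit, sub_le_sub_iff_right,
    CStarAlgebra.inv_le_inv_iff hB0 hA0]

end stmt12aux

/-- `A ↦ A⁻¹ − I` is an order anti-isomorphism from `(0, I]` onto `[0, ∞)` with inverse
`A ↦ (I + A)⁻¹`: it is a bijection, the two maps are mutually inverse, and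
`A ≤ B ↔ B⁻¹ − I ≤ A⁻¹ − I`. -/
theorem stmt_12 {H : Type*} [NormedAddCommGroup H] [InnerProductSpace ℂ H] [CompleteSpace H] :
    Set.BijOn (fun A : H →L[ℂ] H => Ring.inverse A - 1)
      {A : H →L[ℂ] H | IsSelfAdjoint A ∧ 0 ≤ A ∧ A ≤ 1 ∧ IsUnit A}
      {A : H →L[ℂ] H | IsSelfAdjoint A ∧ 0 ≤ A} ∧
    (∀ A ∈ {A : H →L[ℂ] H | IsSelfAdjoint A ∧ 0 ≤ A ∧ A ≤ 1 ∧ IsUnit A},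
      Ring.inverse (1 + (Ring.inverse A - 1)) = A) ∧
    (∀ A ∈ {A : H →L[ℂ] H | IsSelfAdjoint A ∧ 0 ≤ A},
      Ring.inverse (Ring.inverse (1 + A)) - 1 = A) ∧
    (∀ A ∈ {A : H →L[ℂ] H | IsSelfAdjoint A ∧ 0 ≤ A ∧ A ≤ 1 ∧ IsUnit A},
      ∀ B ∈ {A : H →L[ℂ] H | IsSelfAdjoint A ∧ 0 ≤ A ∧ A ≤ 1 ∧ IsUnit A},
        (A ≤ B ↔ Ring.inverse B - 1 ≤ Ring.inverse A - 1)) := by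
  refine ⟨⟨fun A hA => aux_fwd_mem hA, fun A hA B hB hAB => ?_, fun B hB => ?_⟩,
    fun A hA => aux_left_inv hA, fun B hB => aux_right_inv hB,
    fun A hA B hB => aux_order hA hB⟩
  · have hAB' : Ring.inverse A - 1 = Ring.inverse B - 1 := hAB
    exact le_antisymm ((aux_order hA hB).mpr hAB'.ge) ((aux_order hB hA).mpr hAB'.le)
  · exact ⟨Ring.inverse (1 + B), aux_back_mem hB, aux_right_inv hB⟩
end

section
/- For an invertible bounded linear operator T on a complex Hilbert space, the map A ↦ I − (I + T A T*)⁻¹ is an order isomorphism from the effect algebra [0, I] onto the operator interval [0, (I + (T T*)⁻¹)⁻¹]. -/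
section aux
variable {A : Type*} [CStarAlgebra A] [PartialOrder A] [StarOrderedRing A]

omit [PartialOrder A] [StarOrderedRing A] in
lemma my_conjconj (u : Aˣ) (a : A) :
    (↑u⁻¹ : A) * ((↑u : A) * a * star ↑u) * star (↑u⁻¹ : A) = a := by
  have h2 : star (↑u : A) * star (↑u⁻¹ : A) = 1 := by
    rw [← star_mul, Units.inv_mul, star_one]
  calc (↑u⁻¹ : A) * ((↑u : A) * a * star ↑u) * star (↑u⁻¹ : A)
      = ((↑u⁻¹ : A) * ↑u) * a * (star (↑u : A) * star (↑u⁻¹ : A)) := by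
        simp only [mul_assoc]
    _ = a := by rw [Units.inv_mul, h2, one_mul, mul_one]

lemma my_conj_le_conj_iff (u : Aˣ) {a b : A} :
    (↑u : A) * a * star ↑u ≤ (↑u : A) * b * star ↑u ↔ a ≤ b := by
  constructor
  · intro h
    have := star_right_conjugate_le_conjugate h (↑u⁻¹ : A)
    rwa [my_conjconj u a, my_conjconj u b] at this
  · intro h
    exact star_right_conjugate_le_conjugate h _

/-- unit whose coercion is `1 + x` for `0 ≤ x` -/
noncomputable def myUnit {x : A} (hx : 0 ≤ x) : Aˣ :=
  (CStarAlgebra.isUnit_of_le 1 (le_add_of_nonneg_right hx) isStrictlyPositive_one).unit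

lemma myUnit_coe {x : A} (hx : 0 ≤ x) : (↑(myUnit hx) : A) = 1 + x := IsUnit.unit_spec _

lemma myUnit_nonneg {x : A} (hx : 0 ≤ x) : (0 : A) ≤ ↑(myUnit hx) := by
  rw [myUnit_coe]; exact add_nonneg zero_le_one hx

lemma myUnit_one_le {x : A} (hx : 0 ≤ x) : (1 : A) ≤ ↑(myUnit hx) := by
  rw [myUnit_coe]; exact le_add_of_nonneg_right hx

lemma myUnit_inv_eq {x : A} (hx : 0 ≤ x) :
    Ring.inverse (1 + x) = (↑(myUnit hx)⁻¹ : A) := by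
  rw [← myUnit_coe hx, Ring.inverse_unit]

theorem my_main (t : Aˣ) :
    Set.BijOn (fun a : A => 1 - Ring.inverse (1 + ↑t * a * star ↑t))
      {a : A | IsSelfAdjoint a ∧ 0 ≤ a ∧ a ≤ 1}
      {c : A | IsSelfAdjoint c ∧ 0 ≤ c ∧
        c ≤ Ring.inverse (1 + Ring.inverse ((↑t : A) * star ↑t))} ∧
    ∀ a ∈ {a : A | IsSelfAdjoint a ∧ 0 ≤ a ∧ a ≤ 1},
      ∀ b ∈ {a : A | IsSelfAdjoint a ∧ 0 ≤ a ∧ a ≤ 1},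
      (a ≤ b ↔ 1 - Ring.inverse (1 + ↑t * a * star ↑t) ≤
        1 - Ring.inverse (1 + ↑t * b * star ↑t)) := by
  have hS : (0 : A) ≤ ↑t * star ↑t := mul_star_self_nonneg _
  have hconj : ∀ {a : A}, 0 ≤ a → (0 : A) ≤ ↑t * a * star ↑t :=
    fun ha => star_right_conjugate_nonneg ha _
  set v : Aˣ := myUnit hS with hv
  have hv_coe : (↑v : A) = 1 + ↑t * star ↑t := myUnit_coe hS
  have hSu : IsUnit ((↑t : A) * star ↑t) := t.isUnit.mul ((Units.isUnit _).star)
  have hSinv_nonneg : (0 : A) ≤ Ring.inverse ((↑t : A) * star ↑t) := by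
    rw [← hSu.unit_spec, Ring.inverse_unit]
    have h := hS
    rw [← hSu.unit_spec] at h
    exact CFC.inv_nonneg_of_nonneg hSu.unit h
  -- the bound equals 1 - v⁻¹
  have hbound : Ring.inverse (1 + Ring.inverse ((↑t : A) * star ↑t)) = 1 - (↑v⁻¹ : A) := by
    rw [myUnit_inv_eq hSinv_nonneg]
    refine Units.inv_eq_of_mul_eq_one_right ?_
    have h1 : (↑t * star ↑t : A) * ↑v⁻¹ = 1 - ↑v⁻¹ := by
      have : (↑t * star ↑t : A) = ↑v - 1 := by rw [hv_coe]; noncomm_ring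
      rw [this, sub_mul, one_mul, Units.mul_inv]
    have h2 : Ring.inverse ((↑t : A) * star ↑t) * (↑t * star ↑t) = 1 := by
      rw [← hSu.unit_spec, Ring.inverse_unit, Units.inv_mul]
    calc (↑(myUnit hSinv_nonneg) : A) * (1 - ↑v⁻¹)
        = (1 + Ring.inverse ((↑t : A) * star ↑t)) * (1 - ↑v⁻¹) := by
          rw [myUnit_coe]
      _ = (1 - ↑v⁻¹) + Ring.inverse ((↑t : A) * star ↑t) * ((↑t * star ↑t : A) * ↑v⁻¹) := by
          rw [h1]; noncomm_ring
      _ = (1 - ↑v⁻¹) + ↑v⁻¹ := by rw [← mul_assoc, h2, one_mul]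
      _ = 1 := by noncomm_ring
  -- generic facts about u a = 1 + t a t*
  have key_inv : ∀ {a : A} (ha : 0 ≤ a),
      Ring.inverse (1 + ↑t * a * star ↑t) = (↑(myUnit (hconj ha))⁻¹ : A) :=
    fun ha => myUnit_inv_eq (hconj ha)
  -- order iff on the nose
  have horder : ∀ {a b : A}, 0 ≤ a → 0 ≤ b →
      (a ≤ b ↔ 1 - Ring.inverse (1 + ↑t * a * star ↑t) ≤
        1 - Ring.inverse (1 + ↑t * b * star ↑t)) := by
    intro a b ha hb
    rw [key_inv ha, key_inv hb, sub_le_sub_iff_left,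
      CStarAlgebra.inv_le_inv_iff (myUnit_nonneg (hconj hb)) (myUnit_nonneg (hconj ha)),
      myUnit_coe, myUnit_coe, add_le_add_iff_left, my_conj_le_conj_iff]
  -- membership of image
  have hmaps : ∀ {a : A}, 0 ≤ a → a ≤ 1 →
      (1 - Ring.inverse (1 + ↑t * a * star ↑t)) ∈
        {c : A | IsSelfAdjoint c ∧ 0 ≤ c ∧
          c ≤ Ring.inverse (1 + Ring.inverse ((↑t : A) * star ↑t))} := by
    intro a ha ha1
    have h0 : (0:A) ≤ 1 - Ring.inverse (1 + ↑t * a * star ↑t) := by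
      rw [key_inv ha, sub_nonneg]
      exact CStarAlgebra.inv_le_one (myUnit_one_le (hconj ha))
    refine ⟨.of_nonneg h0, h0, ?_⟩
    have h1 : ↑t * a * star ↑t ≤ ↑t * (1:A) * star ↑t := star_right_conjugate_le_conjugate ha1 _
    have h2 : (↑(myUnit (hconj ha)) : A) ≤ ↑v := by
      rw [myUnit_coe, hv_coe]
      calc (1:A) + ↑t * a * star ↑t ≤ 1 + ↑t * (1:A) * star ↑t := by
            exact add_le_add le_rfl h1
        _ = 1 + ↑t * star ↑t := by rw [mul_one]
    rw [hbound, key_inv ha]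
    exact sub_le_sub_left (CStarAlgebra.inv_le_inv (myUnit_nonneg (hconj ha)) h2) 1
  refine ⟨⟨?_, ?_, ?_⟩, ?_⟩
  · -- MapsTo
    rintro a ⟨-, ha, ha1⟩
    exact hmaps ha ha1
  · -- InjOn
    rintro a ⟨-, ha, -⟩ b ⟨-, hb, -⟩ hab
    exact le_antisymm ((horder ha hb).2 hab.le) ((horder hb ha).2 hab.ge)
  · -- SurjOn
    rintro c ⟨hcsa, hc0, hc1⟩
    rw [hbound] at hc1
    -- d = 1 - c is a unit
    have hvinv0 : (0:A) ≤ (↑v⁻¹ : A) := CFC.inv_nonneg_of_nonneg v (myUnit_nonneg hS)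
    have hd_unit : IsUnit (1 - c) := by
      refine CStarAlgebra.isUnit_of_le (↑v⁻¹ : A) ?_ ((v⁻¹).isStrictlyPositive_of_le hvinv0)
      rwa [le_sub_comm] at hc1
    set d : Aˣ := hd_unit.unit with hdd
    have hd_coe : (↑d : A) = 1 - c := hd_unit.unit_spec
    have hd0 : (0:A) ≤ ↑d := by
      rw [hd_coe]; rw [le_sub_comm] at hc1; exact hvinv0.trans hc1
    have hdinv0 : (0:A) ≤ (↑d⁻¹ : A) := CFC.inv_nonneg_of_nonneg d hd0
    have hd_le_one : (↑d : A) ≤ 1 := by rw [hd_coe]; simpa using hc0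
    have hone_le_dinv : (1:A) ≤ (↑d⁻¹ : A) :=
      (CStarAlgebra.one_le_inv_iff_le_one hd0).2 hd_le_one
    -- candidate preimage
    set a : A := ↑t⁻¹ * ((↑d⁻¹ : A) - 1) * star ↑t⁻¹ with haa
    have ha0 : (0:A) ≤ a := star_right_conjugate_nonneg (by rwa [sub_nonneg]) _
    have hta : (↑t : A) * a * star ↑t = (↑d⁻¹ : A) - 1 := by
      rw [haa]
      have := my_conjconj t⁻¹ ((↑d⁻¹ : A) - 1)
      simpa [inv_inv] using this
    have ha1 : a ≤ 1 := by
      rw [← my_conj_le_conj_iff t, hta]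
      have : (↑d⁻¹ : A) ≤ ↑v := by
        rw [CStarAlgebra.inv_le_iff hd0 (myUnit_nonneg hS)]
        rwa [le_sub_comm] at hc1
      calc (↑d⁻¹ : A) - 1 ≤ ↑v - 1 := sub_le_sub_right this 1
        _ = ↑t * star ↑t := by rw [hv_coe]; noncomm_ring
        _ = ↑t * (1:A) * star ↑t := by rw [mul_one]
    refine ⟨a, ⟨.of_nonneg ha0, ha0, ha1⟩, ?_⟩
    show 1 - Ring.inverse (1 + ↑t * a * star ↑t) = c
    rw [hta]
    have : (1:A) + ((↑d⁻¹ : A) - 1) = ↑d⁻¹ := by noncomm_ring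
    rw [this, Ring.inverse_unit, inv_inv, hd_coe]
    noncomm_ring
  · rintro a ⟨-, ha, -⟩ b ⟨-, hb, -⟩
    exact horder ha hb
end aux

theorem stmt_13 {H : Type*} [NormedAddCommGroup H] [InnerProductSpace ℂ H] [CompleteSpace H]
    (T : H →L[ℂ] H) (hT : IsUnit T) :
    Set.BijOn (fun A : H →L[ℂ] H => 1 - Ring.inverse (1 + T * A * ContinuousLinearMap.adjoint T))
      {A : H →L[ℂ] H | IsSelfAdjoint A ∧ 0 ≤ A ∧ A ≤ 1}
      {C : H →L[ℂ] H | IsSelfAdjoint C ∧ 0 ≤ C ∧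
        C ≤ Ring.inverse (1 + Ring.inverse (T * ContinuousLinearMap.adjoint T))} ∧
    ∀ A ∈ {A : H →L[ℂ] H | IsSelfAdjoint A ∧ 0 ≤ A ∧ A ≤ 1}, ∀ B ∈ {A : H →L[ℂ] H | IsSelfAdjoint A ∧ 0 ≤ A ∧ A ≤ 1},
      (A ≤ B ↔ 1 - Ring.inverse (1 + T * A * ContinuousLinearMap.adjoint T) ≤
        1 - Ring.inverse (1 + T * B * ContinuousLinearMap.adjoint T)) := by
  have hadj : ContinuousLinearMap.adjoint T = star T := rfl
  rw [hadj, ← hT.unit_spec]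
  exact my_main hT.unit
end

section
/- Let T be an invertible bounded linear operator with ‖T‖ > 1, set S = T/‖T‖ and r = ‖T‖²/(1 + ‖T‖²). Then for every A in the effect algebra [0, I]: (f_r(SS*))⁻¹ = r·(I + (TT*)⁻¹) and r·f_r(S A S*) = I − (I + T A T*)⁻¹. -/
set_option maxHeartbeats 1000000
set_option synthInstance.maxHeartbeats 400000

private lemma ringInv_eq {M₀ : Type*} [MonoidWithZero M₀] {a b : M₀}
    (h1 : a * b = 1) (h2 : b * a = 1) : Ring.inverse a = b := by
  have : Ring.inverse ((⟨a, b, h1, h2⟩ : M₀ˣ) : M₀) = b := Ring.inverse_unit _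
  simpa using this

private lemma keyLemma {H : Type*} [NormedAddCommGroup H] [InnerProductSpace ℂ H]
    [CompleteSpace H] {r : ℝ} (hr0 : 0 < r) (hr1 : r < 1) (b : H →L[ℂ] H) (hb : 0 ≤ b) :
    fOp r b * (r • b + (1 - r) • 1) = b ∧ (r • b + (1 - r) • 1) * fOp r b = b ∧
      IsUnit (r • b + (1 - r) • 1) := by
  have hsa : IsSelfAdjoint b := hb.isSelfAdjoint
  have hspec : ∀ x ∈ spectrum ℝ b, 0 ≤ x := fun x hx => spectrum_nonneg_of_nonneg hb hx
  have hden : ∀ x ∈ spectrum ℝ b, r * x + 1 - r ≠ 0 := by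
    intro x hx
    have := hspec x hx
    nlinarith
  have hf : ContinuousOn (fun x : ℝ => x / (r * x + 1 - r)) (spectrum ℝ b) := by
    apply ContinuousOn.div continuousOn_id (by fun_prop) hden
  have hU : r • b + (1 - r) • 1 = cfc (fun x : ℝ => r * x + (1 - r)) b := by
    rw [show (fun x : ℝ => r * x + (1 - r)) = (fun x : ℝ => (1 - r) + (r * x)) by
      ext x; ring]
    rw [cfc_const_add (1 - r) (fun x : ℝ => r * x) b (by fun_prop) hsa,
      cfc_const_mul_id r b hsa, Algebra.algebraMap_eq_smul_one, add_comm]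
  have hUg : ContinuousOn (fun x : ℝ => r * x + (1 - r)) (spectrum ℝ b) := by fun_prop
  have h1 : fOp r b * (r • b + (1 - r) • 1) = b := by
    rw [hU, fOp, ← cfc_mul _ _ b hf hUg]
    rw [cfc_congr (g := fun x : ℝ => x) (fun x hx => by
      show x / (r * x + 1 - r) * (r * x + (1 - r)) = x
      have h : r * x + (1 - r) = r * x + 1 - r := by ring
      rw [h]; exact div_mul_cancel₀ x (hden x hx))]
    exact cfc_id' ℝ b hsa
  have h2 : (r • b + (1 - r) • 1) * fOp r b = b := by
    rw [hU, fOp, ← cfc_mul _ _ b hUg hf]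
    rw [cfc_congr (g := fun x : ℝ => x) (fun x hx => by
      show (r * x + (1 - r)) * (x / (r * x + 1 - r)) = x
      have h : r * x + (1 - r) = r * x + 1 - r := by ring
      rw [h, mul_comm]; exact div_mul_cancel₀ x (hden x hx))]
    exact cfc_id' ℝ b hsa
  refine ⟨h1, h2, ?_⟩
  rw [hU]
  exact (isUnit_cfc_iff _ b hUg hsa).mpr (fun x hx => by
    have h : r * x + (1 - r) = r * x + 1 - r := by ring
    rw [h]; exact hden x hx)

theorem stmt_18 {H : Type*} [NormedAddCommGroup H] [InnerProductSpace ℂ H] [CompleteSpace H]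
    (T : H →L[ℂ] H) (hT : IsUnit T) (hTn : 1 < ‖T‖) :
    Ring.inverse (fOp (‖T‖ ^ 2 / (1 + ‖T‖ ^ 2))
        ((‖T‖⁻¹ • T) * ContinuousLinearMap.adjoint (‖T‖⁻¹ • T))) =
      (‖T‖ ^ 2 / (1 + ‖T‖ ^ 2)) • (1 + Ring.inverse (T * ContinuousLinearMap.adjoint T)) ∧
    ∀ A ∈ {A : H →L[ℂ] H | IsSelfAdjoint A ∧ 0 ≤ A ∧ A ≤ 1},
      (‖T‖ ^ 2 / (1 + ‖T‖ ^ 2)) • fOp (‖T‖ ^ 2 / (1 + ‖T‖ ^ 2))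
          ((‖T‖⁻¹ • T) * A * ContinuousLinearMap.adjoint (‖T‖⁻¹ • T)) =
        1 - Ring.inverse (1 + T * A * ContinuousLinearMap.adjoint T) := by
  set c : ℝ := ‖T‖ with hc
  have hc1 : (1 : ℝ) < c := hTn
  have hc0 : (0 : ℝ) < c := by linarith
  have hcc : (0 : ℝ) < 1 + c ^ 2 := by positivity
  set r : ℝ := c ^ 2 / (1 + c ^ 2) with hrdef
  have hr0 : 0 < r := by positivity
  have hr1 : r < 1 := by
    rw [hrdef, div_lt_one hcc]; linarith
  have h1r : 1 - r = (1 + c ^ 2)⁻¹ := by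
    rw [hrdef]
    field_simp; ring
  have hrc : (1 - r) * c ^ 2 = r := by
    rw [h1r, hrdef]; field_simp
  set S : H →L[ℂ] H := c⁻¹ • T with hS
  have hSadj : ContinuousLinearMap.adjoint S = c⁻¹ • ContinuousLinearMap.adjoint T := by
    rw [← ContinuousLinearMap.star_eq_adjoint, ← ContinuousLinearMap.star_eq_adjoint, hS,
      star_smul, star_trivial]
  constructor
  · -- first part
    set W : H →L[ℂ] H := T * ContinuousLinearMap.adjoint T with hW
    have hWu : IsUnit W := hT.mul (by
      rw [← ContinuousLinearMap.star_eq_adjoint]; exact hT.star)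
    set b : H →L[ℂ] H := S * ContinuousLinearMap.adjoint S with hb
    have hbW : b = (c ^ 2)⁻¹ • W := by
      rw [hb, hSadj, hS, smul_mul_smul_comm, hW]
      congr 1
      rw [sq]; exact (mul_inv _ _).symm
    have hbpos : 0 ≤ b := by
      rw [hb, ← ContinuousLinearMap.star_eq_adjoint]
      exact mul_star_self_nonneg S
    obtain ⟨k1, k2, kU⟩ := keyLemma hr0 hr1 b hbpos
    set U : H →L[ℂ] H := r • b + (1 - r) • 1 with hUdef
    have hbu : IsUnit b := by
      rw [hbW]
      exact (IsUnit.smul (Units.mk0 ((c ^ 2)⁻¹ : ℝ) (by positivity)) hWu)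
    set iW : H →L[ℂ] H := Ring.inverse W with hiW
    have hWiW : W * iW = 1 := Ring.mul_inverse_cancel _ hWu
    have hiWW : iW * W = 1 := Ring.inverse_mul_cancel _ hWu
    set ib : H →L[ℂ] H := Ring.inverse b with hibdef
    have hib : ib = (c ^ 2) • iW := by
      rw [hibdef]
      apply ringInv_eq
      · rw [hbW, smul_mul_smul_comm, hWiW, inv_mul_cancel₀ (by positivity : (c:ℝ) ^ 2 ≠ 0),
          one_smul]
      · rw [hbW, smul_mul_smul_comm, hiWW, mul_inv_cancel₀ (by positivity : (c:ℝ) ^ 2 ≠ 0),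
          one_smul]
    have hbib : b * ib = 1 := Ring.mul_inverse_cancel _ hbu
    have hibb : ib * b = 1 := Ring.inverse_mul_cancel _ hbu
    have hcomm : U * ib = ib * U := by
      rw [hUdef]
      simp only [add_mul, mul_add, smul_mul_assoc, mul_smul_comm, one_mul, mul_one]
      congr 1
      congr 1
      calc b * ib = 1 := hbib
        _ = ib * b := hibb.symm
    have main : Ring.inverse (fOp r b) = U * ib := by
      apply ringInv_eq
      · rw [← mul_assoc, k1, hbib]
      · rw [hcomm, mul_assoc, k2, hibb]
    rw [show fOp (‖T‖ ^ 2 / (1 + ‖T‖ ^ 2)) ((‖T‖⁻¹ • T) * ContinuousLinearMap.adjoint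
        (‖T‖⁻¹ • T)) = fOp r b by rfl]
    rw [main, hUdef, add_mul, smul_mul_assoc, smul_mul_assoc, hbib, one_mul, hib,
      smul_smul, hrc, smul_add]
  · -- second part
    rintro A ⟨hAsa, hA0, _⟩
    set b : H →L[ℂ] H := S * A * ContinuousLinearMap.adjoint S with hb
    have hbpos : 0 ≤ b := by
      rw [hb, ← ContinuousLinearMap.star_eq_adjoint]
      exact star_right_conjugate_nonneg hA0 S
    obtain ⟨k1, k2, kU⟩ := keyLemma hr0 hr1 b hbpos
    set U : H →L[ℂ] H := r • b + (1 - r) • 1 with hUdef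
    set iU : H →L[ℂ] H := Ring.inverse U with hiU
    have hUiU : U * iU = 1 := Ring.mul_inverse_cancel _ kU
    have hiUU : iU * U = 1 := Ring.inverse_mul_cancel _ kU
    have hbT : (c ^ 2) • b = T * A * ContinuousLinearMap.adjoint T := by
      rw [hb, hSadj, hS, mul_smul_comm, smul_mul_assoc, smul_mul_assoc, smul_smul, smul_smul]
      rw [show c ^ 2 * c⁻¹ * c⁻¹ = 1 by field_simp, one_smul]
    have hsum : 1 + T * A * ContinuousLinearMap.adjoint T = (1 + c ^ 2) • U := by
      rw [← hbT, hUdef, smul_add, smul_smul, smul_smul]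
      rw [show (1 + c ^ 2) * r = c ^ 2 by rw [hrdef]; field_simp,
        show (1 + c ^ 2) * (1 - r) = 1 by rw [h1r]; field_simp, one_smul, add_comm]
    have hinv : Ring.inverse (1 + T * A * ContinuousLinearMap.adjoint T)
        = (1 - r) • iU := by
      apply ringInv_eq
      · rw [hsum, h1r, smul_mul_smul_comm, hUiU,
          mul_inv_cancel₀ (by positivity : (1 + c ^ 2 : ℝ) ≠ 0), one_smul]
      · rw [hsum, h1r, smul_mul_smul_comm, hiUU,
          inv_mul_cancel₀ (by positivity : (1 + c ^ 2 : ℝ) ≠ 0), one_smul]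
    have hfop : fOp r b = b * iU := by
      calc fOp r b = fOp r b * (U * iU) := by rw [hUiU, mul_one]
        _ = (fOp r b * U) * iU := by rw [mul_assoc]
        _ = b * iU := by rw [k1]
    rw [show fOp (‖T‖ ^ 2 / (1 + ‖T‖ ^ 2)) ((‖T‖⁻¹ • T) * A * ContinuousLinearMap.adjoint
        (‖T‖⁻¹ • T)) = fOp r b by rfl]
    rw [hinv, hfop]
    have hrb : r • b = U - (1 - r) • 1 := by rw [hUdef]; abel
    rw [← smul_mul_assoc, hrb, sub_mul, hUiU, smul_mul_assoc, one_mul]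
end
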